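/- arXiv:1310.5873 — 2 statements merged into one kernel-verified Lean document; each statement's English description precedes it below -/
import Mathlib

section
/- There exists a positive constant C such that, if p = C((log n)/n)^{1/2}, then asymptotically almost surely the random graph G(n,p) on V satisfies: for every k ∈ {1,2}, every collection 𝒮 of pairwise disjoint k-element subsets of V with |𝒮| ≤ (δ/C^k)(n/log n)^{k/2}, and every i ∈ {1,…,6} with V_i ∩ ⋃_{L∈𝒮} L = ∅, one has |N_{B(𝒮,V_i)}(𝒮)| ≥ (1−δ)C^k((log n)/n)^{k/2}|𝒮||V_i|. -/
open MeasureTheory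

abbrev EdgeType (n : ℕ) := {e : Sym2 (Fin n) // ¬ e.IsDiag}

noncomputable def bernoulliBool (p : ℝ) : Measure Bool :=
  ENNReal.ofReal p • Measure.dirac true + ENNReal.ofReal (1 - p) • Measure.dirac false

instance (p : ℝ) : IsFiniteMeasure (bernoulliBool p) := by
  constructor
  simp [bernoulliBool, Measure.add_apply, Measure.smul_apply]

noncomputable def gnp (n : ℕ) (p : ℝ) : Measure (EdgeType n → Bool) :=
  Measure.pi fun _ => bernoulliBool p

def graphOf {n : ℕ} (ω : EdgeType n → Bool) : SimpleGraph (Fin n) :=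
  SimpleGraph.fromEdgeSet {e | ∃ h : ¬ e.IsDiag, ω ⟨e, h⟩ = true}

noncomputable section

/-- δ = 0.01 -/
def dlt : ℝ := 0.01
/-- ε = 0.001 -/
def eps : ℝ := 0.001

/-- The number of vertices `u ∈ U` having a neighbor in `𝒮` in the bipartite
graph `B(𝒮,U)`, i.e. such that `L ⊆ N_G(u)` for some `L ∈ 𝒮`.  This is
`|N_{B(𝒮,U)}(𝒮)|`. -/
def coveredCount {n : ℕ} (G : SimpleGraph (Fin n))
    (S : Finset (Finset (Fin n))) (U : Finset (Fin n)) : ℕ :=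
  {u ∈ (U : Set (Fin n)) | ∃ L ∈ S, ∀ x ∈ L, G.Adj x u}.ncard

/-- The number of edges `e ∈ 𝓜` such that some `u ∈ U` is adjacent (in `G`)
to both endpoints of `e`. -/
def hitCount {n : ℕ} (G : SimpleGraph (Fin n))
    (M : Finset (Finset (Fin n))) (U : Finset (Fin n)) : ℕ :=
  {e ∈ (M : Set (Finset (Fin n))) | ∃ u ∈ U, ∀ x ∈ e, G.Adj x u}.ncard

/-- `M` is a matching of `G[V₀]` of size `2εn` witnessing property (P1). -/
def P1Witness {n : ℕ} (C : ℝ) (V0 : Finset (Fin n)) (G : SimpleGraph (Fin n))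
    (M : Finset (Finset (Fin n))) : Prop :=
  (∀ e ∈ M, ∃ a b : Fin n, G.Adj a b ∧ a ∈ V0 ∧ b ∈ V0 ∧ e = {a, b}) ∧
  (∀ e ∈ M, ∀ e' ∈ M, e ≠ e' → Disjoint e e') ∧
  (M.card : ℝ) = 2 * eps * n ∧
  ∀ U : Finset (Fin n), Disjoint U (M.biUnion id) →
    (U.card : ℝ) ≤ dlt * n / (C ^ 2 * Real.log n) →
    C ^ 2 * Real.log n / (16 * n) * M.card * U.card ≤ (hitCount G M U : ℝ)

/-- Property (P1). -/
def PropP1 {n : ℕ} (C : ℝ) (V0 : Finset (Fin n)) (G : SimpleGraph (Fin n)) : Prop :=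
  ∃ M : Finset (Finset (Fin n)), P1Witness C V0 G M

/-- First half of property (P2): for small families `𝒮` of disjoint `k`-sets,
`|N_{B(𝒮,V_i)}(𝒮)| ≥ (1-δ) Cᵏ (log n / n)^{k/2} |𝒮| |V_i|`. -/
def PropP2a {n : ℕ} (C : ℝ) (V : Fin 7 → Finset (Fin n)) (G : SimpleGraph (Fin n)) : Prop :=
  ∀ k : ℕ, (k = 1 ∨ k = 2) →
    ∀ S : Finset (Finset (Fin n)), (∀ L ∈ S, L.card = k) →
      (∀ L ∈ S, ∀ L' ∈ S, L ≠ L' → Disjoint L L') →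
      (S.card : ℝ) ≤ dlt / C ^ k * ((n : ℝ) / Real.log n) ^ ((k : ℝ) / 2) →
      ∀ i : Fin 7, i ≠ 0 → Disjoint (V i) (S.biUnion id) →
        (1 - dlt) * C ^ k * (Real.log n / n) ^ ((k : ℝ) / 2) * S.card * (V i).card
          ≤ (coveredCount G S (V i) : ℝ)

/-- Second half of property (P2): for large families `𝒮` of disjoint `k`-sets and
large `U` disjoint from `⋃ 𝒮`, the bipartite graph `B(𝒮,U)` has an edge. -/
def PropP2b {n : ℕ} (C : ℝ) (G : SimpleGraph (Fin n)) : Prop :=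
  ∀ k : ℕ, (k = 1 ∨ k = 2) →
    ∀ S : Finset (Finset (Fin n)), (∀ L ∈ S, L.card = k) →
      (∀ L ∈ S, ∀ L' ∈ S, L ≠ L' → Disjoint L L') →
      Real.log n / C ^ (k - 1) * ((n : ℝ) / Real.log n) ^ ((k : ℝ) / 2) ≤ (S.card : ℝ) →
      ∀ U : Finset (Fin n), Disjoint U (S.biUnion id) →
        Real.log n / C ^ (k - 1) * ((n : ℝ) / Real.log n) ^ ((k : ℝ) / 2) ≤ (U.card : ℝ) →
        ∃ L ∈ S, ∃ u ∈ U, ∀ x ∈ L, G.Adj x u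

/-- A graph `G` on `V = V₀ ∪ ⋯ ∪ V₆` is `(n,C)`-good. -/
def IsGood (n : ℕ) (C : ℝ) (V : Fin 7 → Finset (Fin n)) (G : SimpleGraph (Fin n)) : Prop :=
  PropP1 C (V 0) G ∧ PropP2a C V G ∧ PropP2b C G

/-- `V₀, …, V₆` is a partition of the vertex set with `|V_i| = εn` for `1 ≤ i ≤ 6`
and `|V₀| = (1-6ε)n`. -/
def IsPartitionV (n : ℕ) (V : Fin 7 → Finset (Fin n)) : Prop :=
  (∀ i j : Fin 7, i ≠ j → Disjoint (V i) (V j)) ∧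
  (Finset.univ.biUnion V = Finset.univ) ∧
  (∀ i : Fin 7, i ≠ 0 → ((V i).card : ℝ) = eps * n) ∧
  ((V 0).card : ℝ) = (1 - 6 * eps) * n

end

section Infra
variable {n : ℕ} {p : ℝ}

lemma bernoulli_true : bernoulliBool p {true} = ENNReal.ofReal p := by
  simp [bernoulliBool, Measure.add_apply, Measure.smul_apply, Measure.dirac_apply']

lemma bernoulli_false : bernoulliBool p {false} = ENNReal.ofReal (1 - p) := by
  simp [bernoulliBool, Measure.add_apply, Measure.smul_apply, Measure.dirac_apply']

lemma bernoulli_univ (hp0 : 0 ≤ p) (hp1 : p ≤ 1) : bernoulliBool p Set.univ = 1 := by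
  simp [bernoulliBool, Measure.add_apply, Measure.smul_apply]
  rw [← ENNReal.ofReal_add hp0 (by linarith)]
  norm_num

lemma gnp_univ (hp0 : 0 ≤ p) (hp1 : p ≤ 1) : gnp n p Set.univ = 1 := by
  rw [gnp, Measure.pi_univ,
    Finset.prod_congr rfl (fun (e : EdgeType n) _ => bernoulli_univ hp0 hp1 (p := p)),
    Finset.prod_const_one]

/-- weight of an outcome -/
noncomputable def wt (p : ℝ) {n : ℕ} (ω : EdgeType n → Bool) : ℝ :=
  ∏ e : EdgeType n, (if ω e then p else 1 - p)

lemma wt_nonneg (hp0 : 0 ≤ p) (hp1 : p ≤ 1) (ω : EdgeType n → Bool) : 0 ≤ wt p ω :=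
  Finset.prod_nonneg (fun e _ => by by_cases h : ω e <;> simp [h] <;> linarith)

lemma gnp_singleton (hp0 : 0 ≤ p) (hp1 : p ≤ 1) (ω : EdgeType n → Bool) :
    gnp n p {ω} = ENNReal.ofReal (wt p ω) := by
  have h1 : ({ω} : Set (EdgeType n → Bool)) = Set.pi Set.univ (fun e => {ω e}) := by
    ext ω'; simp [Set.mem_pi, funext_iff]
  rw [h1, gnp, Measure.pi_pi, wt,
    ENNReal.ofReal_prod_of_nonneg (fun e _ => by by_cases h : ω e <;> simp [h] <;> linarith)]
  apply Finset.prod_congr rfl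
  intro e _
  by_cases h : ω e <;> simp [h, bernoulli_true, bernoulli_false]

lemma measurable_singleton_omega (ω : EdgeType n → Bool) :
    MeasurableSet ({ω} : Set (EdgeType n → Bool)) := by
  have h1 : ({ω} : Set (EdgeType n → Bool)) = Set.pi Set.univ (fun e => {ω e}) := by
    ext ω'; simp [Set.mem_pi, funext_iff]
  rw [h1]
  exact MeasurableSet.pi Set.countable_univ (fun e _ => MeasurableSet.singleton _)

lemma gnp_finset (hp0 : 0 ≤ p) (hp1 : p ≤ 1) (F : Finset (EdgeType n → Bool)) :
    gnp n p ↑F = ENNReal.ofReal (∑ ω ∈ F, wt p ω) := by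
  have h1 : (↑F : Set (EdgeType n → Bool)) = ⋃ ω ∈ F, {ω} := by
    ext ω'; simp
  rw [h1, measure_biUnion_finset ?_ (fun ω _ => measurable_singleton_omega ω),
    ENNReal.ofReal_sum_of_nonneg (fun ω _ => wt_nonneg hp0 hp1 ω)]
  · exact Finset.sum_congr rfl fun ω _ => gnp_singleton hp0 hp1 ω
  · intro a _ b _ hab
    simp [Set.disjoint_singleton, hab]

lemma wt_sum_one (hp0 : 0 ≤ p) (hp1 : p ≤ 1) :
    ∑ ω : EdgeType n → Bool, wt p ω = 1 := by
  have := gnp_finset (n := n) hp0 hp1 Finset.univ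
  rw [Finset.coe_univ, gnp_univ hp0 hp1] at this
  have h2 : (0:ℝ) ≤ ∑ ω : EdgeType n → Bool, wt p ω :=
    Finset.sum_nonneg fun ω _ => wt_nonneg hp0 hp1 ω
  rw [Eq.comm, ENNReal.ofReal_eq_one] at this
  exact this

end Infra

section Exp
variable {n : ℕ} {p : ℝ}

/-- expectation -/
noncomputable def Ex (p : ℝ) {n : ℕ} (f : (EdgeType n → Bool) → ℝ) : ℝ :=
  ∑ ω : EdgeType n → Bool, wt p ω * f ω

/-- `f` depends only on coordinates in `A` -/
def DetOn {n : ℕ} (A : Finset (EdgeType n)) (f : (EdgeType n → Bool) → ℝ) : Prop :=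
  ∀ ω ω' : EdgeType n → Bool, (∀ e ∈ A, ω e = ω' e) → f ω = f ω'

lemma DetOn.mono {A B : Finset (EdgeType n)} {f : (EdgeType n → Bool) → ℝ}
    (h : DetOn A f) (hAB : A ⊆ B) : DetOn B f :=
  fun ω ω' hagree => h ω ω' (fun e he => hagree e (hAB he))

lemma Ex_one (hp0 : 0 ≤ p) (hp1 : p ≤ 1) : Ex p (fun _ : EdgeType n → Bool => (1:ℝ)) = 1 := by
  simp only [Ex, mul_one]
  exact wt_sum_one hp0 hp1

lemma Ex_mono {f g : (EdgeType n → Bool) → ℝ} (hp0 : 0 ≤ p) (hp1 : p ≤ 1)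
    (h : ∀ ω, f ω ≤ g ω) : Ex p f ≤ Ex p g :=
  Finset.sum_le_sum fun ω _ => mul_le_mul_of_nonneg_left (h ω) (wt_nonneg hp0 hp1 ω)

lemma Ex_nonneg {f : (EdgeType n → Bool) → ℝ} (hp0 : 0 ≤ p) (hp1 : p ≤ 1)
    (h : ∀ ω, 0 ≤ f ω) : 0 ≤ Ex p f :=
  Finset.sum_nonneg fun ω _ => mul_nonneg (wt_nonneg hp0 hp1 ω) (h ω)

/-- The key independence/splitting lemma. -/
lemma Ex_mul_of_disjoint (hp0 : 0 ≤ p) (hp1 : p ≤ 1) {A B : Finset (EdgeType n)}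
    {f g : (EdgeType n → Bool) → ℝ} (hAB : Disjoint A B)
    (hf : DetOn A f) (hg : DetOn B g) :
    Ex p (fun ω => f ω * g ω) = Ex p f * Ex p g := by
  classical
  set P : EdgeType n → Prop := fun e => e ∈ A with hP
  letI instA : Fintype {e // P e} := Subtype.fintype P
  letI instB : Fintype {e // ¬ P e} := Subtype.fintype _
  set φ : ((∀ e : {e // P e}, Bool) × (∀ e : {e // ¬ P e}, Bool)) ≃ (EdgeType n → Bool) :=
    (Equiv.piEquivPiSubtypeProd P (fun _ => Bool)).symm with hφ
  set c : Bool → ℝ := fun b => if b then p else 1 - p with hc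
  set WA : (∀ e : {e // P e}, Bool) → ℝ := fun σ => ∏ e : {e // P e}, c (σ e) with hWA
  set WB : (∀ e : {e // ¬ P e}, Bool) → ℝ := fun τ => ∏ e : {e // ¬ P e}, c (τ e) with hWB
  have happ : ∀ σ τ (e : EdgeType n),
      φ (σ, τ) e = if h : P e then σ ⟨e, h⟩ else τ ⟨e, h⟩ := by
    intro σ τ e
    simp [hφ, Equiv.piEquivPiSubtypeProd_symm_apply]
  have hwt : ∀ σ τ, wt p (φ (σ, τ)) = WA σ * WB τ := by
    intro σ τ
    rw [wt, hWA, hWB, ← Fintype.prod_subtype_mul_prod_subtype P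
      (fun e => if (φ (σ, τ)) e then p else 1 - p)]
    congr 1
    · exact Finset.prod_congr rfl fun e _ => by rw [happ, dif_pos e.2]
    · exact Finset.prod_congr rfl fun e _ => by rw [happ, dif_neg e.2]
  have hmaster : ∀ f' : (EdgeType n → Bool) → ℝ,
      Ex p f' = ∑ σ, ∑ τ, WA σ * WB τ * f' (φ (σ, τ)) := by
    intro f'
    rw [Ex, ← Equiv.sum_comp φ (fun ω => wt p ω * f' ω), Fintype.sum_prod_type]
    exact Finset.sum_congr rfl fun σ _ => Finset.sum_congr rfl fun τ _ => by rw [hwt]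
  have hfF : ∀ σ τ, f (φ (σ, τ)) = f (φ (σ, fun _ => true)) := by
    intro σ τ
    apply hf
    intro e he
    rw [happ, happ, dif_pos (show P e from he), dif_pos (show P e from he)]
  have hgG : ∀ σ τ, g (φ (σ, τ)) = g (φ (fun _ => true, τ)) := by
    intro σ τ
    apply hg
    intro e he
    have hne : ¬ P e := fun hPe => (Finset.disjoint_left.mp hAB) hPe he
    rw [happ, happ, dif_neg hne, dif_neg hne]
  set F : (∀ e : {e // P e}, Bool) → ℝ := fun σ => f (φ (σ, fun _ => true)) with hF
  set G : (∀ e : {e // ¬ P e}, Bool) → ℝ := fun τ => g (φ (fun _ => true, τ)) with hG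
  have e1 : Ex p (fun ω => f ω * g ω) = (∑ σ, WA σ * F σ) * (∑ τ, WB τ * G τ) := by
    rw [hmaster, Finset.sum_mul_sum]
    refine Finset.sum_congr rfl fun σ _ => Finset.sum_congr rfl fun τ _ => ?_
    rw [hfF σ τ, hgG σ τ]; ring
  have e2 : Ex p f = (∑ σ, WA σ * F σ) * (∑ τ, WB τ) := by
    rw [hmaster, Finset.sum_mul_sum]
    refine Finset.sum_congr rfl fun σ _ => Finset.sum_congr rfl fun τ _ => ?_
    rw [hfF σ τ]; ring
  have e3 : Ex p g = (∑ σ, WA σ) * (∑ τ, WB τ * G τ) := by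
    rw [hmaster, Finset.sum_mul_sum]
    refine Finset.sum_congr rfl fun σ _ => Finset.sum_congr rfl fun τ _ => ?_
    rw [hgG σ τ]; ring
  have e4 : (∑ σ, WA σ) * (∑ τ, WB τ) = 1 := by
    have := Ex_one (n := n) hp0 hp1
    rw [hmaster] at this
    rw [← this, Finset.sum_mul_sum]
    exact Finset.sum_congr rfl fun σ _ => Finset.sum_congr rfl fun τ _ => by ring
  calc Ex p (fun ω => f ω * g ω)
      = (∑ σ, WA σ * F σ) * (∑ τ, WB τ * G τ) * ((∑ σ, WA σ) * (∑ τ, WB τ)) := by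
        rw [e4, mul_one, e1]
    _ = Ex p f * Ex p g := by rw [e2, e3]; ring

/-- Expectation of a single-coordinate indicator. -/
lemma Ex_ind (hp0 : 0 ≤ p) (hp1 : p ≤ 1) (e0 : EdgeType n) :
    Ex p (fun ω => if ω e0 then (1:ℝ) else 0) = p := by
  classical
  set F : Finset (EdgeType n → Bool) := Finset.univ.filter (fun ω => ω e0 = true) with hFdef
  have h1 : Ex p (fun ω => if ω e0 then (1:ℝ) else 0) = ∑ ω ∈ F, wt p ω := by
    rw [Ex, Finset.sum_filter]
    exact Finset.sum_congr rfl fun ω _ => by by_cases h : ω e0 <;> simp [h]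
  have h2 : (↑F : Set (EdgeType n → Bool))
      = Set.pi Set.univ (fun e => if e = e0 then {true} else Set.univ) := by
    ext ω
    simp only [hFdef, Finset.coe_filter, Set.mem_setOf_eq, Set.mem_pi, Finset.mem_univ,
      true_and, Set.mem_univ]
    constructor
    · intro h e _
      by_cases he : e = e0
      · subst he; simp [h]
      · simp [he]
    · intro h
      have := h e0 trivial
      simpa using this
  have h3 : gnp n p ↑F = ENNReal.ofReal p := by
    rw [h2, gnp, Measure.pi_pi]
    rw [Finset.prod_eq_single e0]
    · rw [if_pos rfl, bernoulli_true]
    · intro e _ he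
      rw [if_neg he]
      exact bernoulli_univ hp0 hp1
    · intro h
      exact absurd (Finset.mem_univ e0) h
  rw [gnp_finset hp0 hp1] at h3
  rw [h1]
  have hnn : 0 ≤ ∑ ω ∈ F, wt p ω := Finset.sum_nonneg fun ω _ => wt_nonneg hp0 hp1 ω
  rwa [ENNReal.ofReal_eq_ofReal_iff hnn hp0] at h3

end Exp

section Blocks
variable {n : ℕ} {p : ℝ} {ι : Type*} [DecidableEq ι]

lemma detOn_prod {T : Finset ι} {A : ι → Finset (EdgeType n)}
    {h : ι → (EdgeType n → Bool) → ℝ} (hdet : ∀ u ∈ T, DetOn (A u) (h u)) :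
    DetOn (T.biUnion A) (fun ω => ∏ u ∈ T, h u ω) := by
  intro ω ω' hagree
  refine Finset.prod_congr rfl fun u hu => ?_
  exact hdet u hu ω ω' fun e he => hagree e (Finset.mem_biUnion.mpr ⟨u, hu, he⟩)

lemma Ex_prod_blocks (hp0 : 0 ≤ p) (hp1 : p ≤ 1) {A : ι → Finset (EdgeType n)}
    {h : ι → (EdgeType n → Bool) → ℝ} :
    ∀ T : Finset ι, (∀ u ∈ T, ∀ v ∈ T, u ≠ v → Disjoint (A u) (A v)) →
    (∀ u ∈ T, DetOn (A u) (h u)) →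
    Ex p (fun ω => ∏ u ∈ T, h u ω) = ∏ u ∈ T, Ex p (h u) := by
  intro T
  induction T using Finset.induction_on with
  | empty =>
    intro _ _
    simp only [Finset.prod_empty]
    exact Ex_one hp0 hp1
  | insert x T' hx ih =>
    intro hdisj hdet
    have h1 : Ex p (fun ω => ∏ u ∈ insert x T', h u ω)
        = Ex p (fun ω => h x ω * ∏ u ∈ T', h u ω) := by
      congr 1; funext ω; exact Finset.prod_insert hx
    rw [h1, Ex_mul_of_disjoint hp0 hp1 (A := A x) (B := T'.biUnion A) ?_
      (hdet x (Finset.mem_insert_self x T'))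
      (detOn_prod fun u hu => hdet u (Finset.mem_insert_of_mem hu)),
      Finset.prod_insert hx,
      ih (fun u hu v hv huv => hdisj u (Finset.mem_insert_of_mem hu) v
        (Finset.mem_insert_of_mem hv) huv)
        (fun u hu => hdet u (Finset.mem_insert_of_mem hu))]
    rw [Finset.disjoint_biUnion_right]
    intro v hv
    exact hdisj x (Finset.mem_insert_self x T') v (Finset.mem_insert_of_mem hv)
      (fun hxv => hx (hxv ▸ hv))

end Blocks

section Eta
variable {n : ℕ} {p : ℝ}

/-- the edge coordinate between two distinct vertices -/
def ec {n : ℕ} (x u : Fin n) (hxu : x ≠ u) : EdgeType n :=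
  ⟨s(x, u), by simp [hxu]⟩

lemma adj_coord {ω : EdgeType n → Bool} {x u : Fin n} (hxu : x ≠ u) :
    (graphOf ω).Adj x u ↔ ω (ec x u hxu) = true := by
  rw [graphOf, SimpleGraph.fromEdgeSet_adj]
  constructor
  · rintro ⟨⟨h', hω⟩, -⟩
    convert hω
    rfl
  · intro h
    exact ⟨⟨by simp [hxu], h⟩, hxu⟩

/-- coordinates joining `M` to `u` -/
def coordsOf {n : ℕ} (M : Finset (Fin n)) (u : Fin n) : Finset (EdgeType n) :=
  Finset.univ.filter (fun e => ∃ x ∈ M, e.1 = s(x, u))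

lemma ec_mem_coordsOf {M : Finset (Fin n)} {x u : Fin n} (hx : x ∈ M) (hxu : x ≠ u) :
    ec x u hxu ∈ coordsOf M u := by
  simp only [coordsOf, Finset.mem_filter, Finset.mem_univ, true_and]
  exact ⟨x, hx, rfl⟩

open scoped Classical in
/-- indicator that `u` is adjacent to everything in `M` -/
noncomputable def indAll {n : ℕ} (M : Finset (Fin n)) (u : Fin n) (ω : EdgeType n → Bool) : ℝ :=
  if (∀ x ∈ M, (graphOf ω).Adj x u) then 1 else 0

lemma detOn_indAll {M : Finset (Fin n)} {u : Fin n} (hu : u ∉ M) :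
    DetOn (coordsOf M u) (indAll M u) := by
  classical
  intro ω ω' hagree
  have h : (∀ x ∈ M, (graphOf ω).Adj x u) ↔ (∀ x ∈ M, (graphOf ω').Adj x u) := by
    refine forall₂_congr fun x hx => ?_
    have hxu : x ≠ u := fun h => hu (h ▸ hx)
    rw [adj_coord hxu, adj_coord hxu, hagree _ (ec_mem_coordsOf hx hxu)]
  rw [indAll, indAll, if_congr h rfl rfl]

lemma indAll_nonneg {M : Finset (Fin n)} {u : Fin n} (ω : EdgeType n → Bool) :
    0 ≤ indAll M u ω := by
  rw [indAll]; split <;> norm_num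

lemma indAll_le_one {M : Finset (Fin n)} {u : Fin n} (ω : EdgeType n → Bool) :
    indAll M u ω ≤ 1 := by
  rw [indAll]; split <;> norm_num

lemma Ex_indAll (hp0 : 0 ≤ p) (hp1 : p ≤ 1) :
    ∀ (M : Finset (Fin n)) (u : Fin n), u ∉ M → Ex p (indAll M u) = p ^ M.card := by
  classical
  intro M
  induction M using Finset.induction_on with
  | empty =>
    intro u _
    simp only [Finset.card_empty, pow_zero]
    have h : indAll (∅ : Finset (Fin n)) u = fun _ => (1:ℝ) := by
      funext ω; rw [indAll, if_pos]; intro x hx; exact absurd hx (Finset.notMem_empty x)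
    rw [h]
    exact Ex_one hp0 hp1
  | insert x M' hx ih =>
    intro u hu
    have hxu : x ≠ u := fun h => hu (h ▸ Finset.mem_insert_self x M')
    have hu' : u ∉ M' := fun h => hu (Finset.mem_insert_of_mem h)
    have h1 : indAll (insert x M') u
        = fun ω => (if ω (ec x u hxu) then (1:ℝ) else 0) * indAll M' u ω := by
      funext ω
      by_cases hA : ω (ec x u hxu) = true
      · rw [hA, if_pos rfl, one_mul, indAll, indAll]
        refine if_congr ?_ rfl rfl
        constructor
        · intro h y hy; exact h y (Finset.mem_insert_of_mem hy)
        · intro h y hy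
          rcases Finset.mem_insert.mp hy with rfl | hy'
          · rw [adj_coord hxu]; exact hA
          · exact h y hy'
      · rw [if_neg hA, zero_mul, indAll, if_neg]
        intro h
        exact hA ((adj_coord hxu).mp (h x (Finset.mem_insert_self x M')))
    rw [h1, Ex_mul_of_disjoint hp0 hp1 (A := {ec x u hxu}) (B := coordsOf M' u) ?_ ?_
      (detOn_indAll hu'), Ex_ind hp0 hp1, ih u hu', Finset.card_insert_of_notMem hx, pow_succ]
    · ring
    · rw [Finset.disjoint_left]
      intro e he hemem
      rw [Finset.mem_singleton] at he
      subst he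
      rcases Finset.mem_filter.mp hemem with ⟨-, y, hy, hey⟩
      have hey' : s(x, u) = s(y, u) := hey
      rw [Sym2.congr_left] at hey'
      exact hx (hey' ▸ hy)
    · intro ω ω' hagree
      dsimp only
      rw [hagree _ (Finset.mem_singleton_self _)]

end Eta

section Xi
variable {n : ℕ} {p : ℝ}

open scoped Classical in
/-- indicator that some `L ∈ S` is fully joined to `u` -/
noncomputable def xiS {n : ℕ} (S : Finset (Finset (Fin n))) (u : Fin n)
    (ω : EdgeType n → Bool) : ℝ :=
  if (∃ L ∈ S, ∀ x ∈ L, (graphOf ω).Adj x u) then 1 else 0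

lemma xiS_nonneg {S : Finset (Finset (Fin n))} {u : Fin n} (ω : EdgeType n → Bool) :
    0 ≤ xiS S u ω := by
  rw [xiS]; split <;> norm_num

lemma xiS_le_one {S : Finset (Finset (Fin n))} {u : Fin n} (ω : EdgeType n → Bool) :
    xiS S u ω ≤ 1 := by
  rw [xiS]; split <;> norm_num

lemma detOn_xiS {S : Finset (Finset (Fin n))} {u : Fin n} (hu : u ∉ S.biUnion id) :
    DetOn (coordsOf (S.biUnion id) u) (xiS S u) := by
  classical
  intro ω ω' hagree
  have h : (∃ L ∈ S, ∀ x ∈ L, (graphOf ω).Adj x u)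
      ↔ (∃ L ∈ S, ∀ x ∈ L, (graphOf ω').Adj x u) := by
    refine exists_congr fun L => and_congr_right fun hL => forall₂_congr fun x hx => ?_
    have hxB : x ∈ S.biUnion id := Finset.mem_biUnion.mpr ⟨L, hL, hx⟩
    have hxu : x ≠ u := fun h => hu (h ▸ hxB)
    rw [adj_coord hxu, adj_coord hxu, hagree _ (ec_mem_coordsOf hxB hxu)]
  rw [xiS, xiS, if_congr h rfl rfl]

lemma Ex_sum {ι : Type*} (T : Finset ι) (f : ι → (EdgeType n → Bool) → ℝ) :
    Ex p (fun ω => ∑ u ∈ T, f u ω) = ∑ u ∈ T, Ex p (f u) := by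
  rw [Ex]
  simp_rw [Finset.mul_sum]
  rw [Finset.sum_comm]
  rfl

lemma Ex_sub {f g : (EdgeType n → Bool) → ℝ} :
    Ex p (fun ω => f ω - g ω) = Ex p f - Ex p g := by
  rw [Ex, Ex, Ex, ← Finset.sum_sub_distrib]
  exact Finset.sum_congr rfl fun ω _ => by ring

lemma Ex_const_mul (c : ℝ) (f : (EdgeType n → Bool) → ℝ) :
    Ex p (fun ω => c * f ω) = c * Ex p f := by
  rw [Ex, Ex, Finset.mul_sum]
  exact Finset.sum_congr rfl fun ω _ => by ring

/-- Bonferroni pointwise -/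
lemma xiS_ge_bonferroni {S : Finset (Finset (Fin n))} {u : Fin n} (ω : EdgeType n → Bool) :
    (∑ L ∈ S, indAll L u ω) - (1/2) * ∑ z ∈ S.offDiag, indAll z.1 u ω * indAll z.2 u ω
      ≤ xiS S u ω := by
  classical
  set T := S.filter (fun L => ∀ x ∈ L, (graphOf ω).Adj x u) with hT
  have h1 : (∑ L ∈ S, indAll L u ω) = (T.card : ℝ) := by
    rw [hT]
    rw [Finset.card_filter]
    push_cast
    refine Finset.sum_congr rfl fun L _ => ?_
    rw [indAll]
    try (split <;> simp [*])
  have h2 : (∑ z ∈ S.offDiag, indAll z.1 u ω * indAll z.2 u ω)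
      = ((T.card * T.card - T.card : ℕ) : ℝ) := by
    rw [← Finset.offDiag_card]
    have hset : T.offDiag = S.offDiag.filter
        (fun z => (∀ x ∈ z.1, (graphOf ω).Adj x u) ∧ (∀ x ∈ z.2, (graphOf ω).Adj x u)) := by
      ext z
      simp only [Finset.mem_offDiag, Finset.mem_filter, hT]
      tauto
    rw [hset, Finset.card_filter]
    push_cast
    refine Finset.sum_congr rfl fun z _ => ?_
    by_cases hz1 : (∀ x ∈ z.1, (graphOf ω).Adj x u)
    · by_cases hz2 : (∀ x ∈ z.2, (graphOf ω).Adj x u)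
      · rw [indAll, indAll, if_pos hz1, if_pos hz2, if_pos ⟨hz1, hz2⟩]
        try norm_num
      · rw [indAll, indAll, if_pos hz1, if_neg hz2, if_neg (fun h => hz2 h.2)]
        try norm_num
    · rw [indAll, if_neg hz1, zero_mul, if_neg (fun h => hz1 h.1)]
  have h3 : xiS S u ω = if T.Nonempty then (1:ℝ) else 0 := by
    rw [xiS, hT]
    refine if_congr ?_ rfl rfl
    rw [Finset.filter_nonempty_iff]
  rw [h1, h2, h3]
  rcases Nat.eq_zero_or_pos T.card with h0 | hpos
  · rw [h0]
    have : ¬ T.Nonempty := by rwa [Finset.nonempty_iff_ne_empty, ne_eq, not_not,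
      ← Finset.card_eq_zero]
    rw [if_neg this]
    simp
  · rw [if_pos (Finset.card_pos.mp hpos)]
    have hsub : T.card ≤ T.card * T.card := Nat.le_mul_of_pos_left _ hpos
    rw [Nat.cast_sub hsub]
    push_cast
    rcases Nat.lt_or_ge T.card 2 with h2' | h2'
    · interval_cases h : T.card <;> norm_num
    · have : (2:ℝ) ≤ (T.card : ℝ) := by exact_mod_cast h2'
      nlinarith [this]

/-- expectation lower bound for `xiS` -/
lemma Ex_xiS_ge (hp0 : 0 ≤ p) (hp1 : p ≤ 1) {S : Finset (Finset (Fin n))} {k : ℕ}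
    (hk : ∀ L ∈ S, L.card = k)
    (hdisj : ∀ L ∈ S, ∀ L' ∈ S, L ≠ L' → Disjoint L L')
    {u : Fin n} (hu : u ∉ S.biUnion id) :
    (S.card : ℝ) * p ^ k - (1/2) * (S.card * S.card - S.card) * p ^ (2 * k)
      ≤ Ex p (xiS S u) := by
  classical
  have huL : ∀ L ∈ S, u ∉ L := fun L hL hx => hu (Finset.mem_biUnion.mpr ⟨L, hL, hx⟩)
  have step : Ex p (fun ω => (∑ L ∈ S, indAll L u ω)
      - (1/2) * ∑ z ∈ S.offDiag, indAll z.1 u ω * indAll z.2 u ω) ≤ Ex p (xiS S u) :=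
    Ex_mono hp0 hp1 fun ω => xiS_ge_bonferroni ω
  have e1 : Ex p (fun ω => (∑ L ∈ S, indAll L u ω)
      - (1/2) * ∑ z ∈ S.offDiag, indAll z.1 u ω * indAll z.2 u ω)
      = (∑ L ∈ S, Ex p (indAll L u))
        - (1/2) * ∑ z ∈ S.offDiag, Ex p (fun ω => indAll z.1 u ω * indAll z.2 u ω) := by
    rw [← Ex_sum, ← Ex_sum S.offDiag, ← Ex_const_mul, ← Ex_sub]
  rw [e1] at step
  have e2 : ∑ L ∈ S, Ex p (indAll L u) = (S.card : ℝ) * p ^ k := by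
    rw [Finset.sum_congr rfl (fun L hL => by
      rw [Ex_indAll hp0 hp1 L u (huL L hL), hk L hL]), Finset.sum_const, nsmul_eq_mul]
  have e3 : ∀ z ∈ S.offDiag, Ex p (fun ω => indAll z.1 u ω * indAll z.2 u ω) = p ^ (2 * k) := by
    rintro ⟨L, L'⟩ hz
    rcases Finset.mem_offDiag.mp hz with ⟨hL, hL', hne⟩
    have hdLL : Disjoint L L' := hdisj L hL L' hL' hne
    have hpt : (fun ω => indAll L u ω * indAll L' u ω) = indAll (L ∪ L') u := by
      funext ω
      have hiff : (∀ x ∈ L ∪ L', (graphOf ω).Adj x u)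
          ↔ (∀ x ∈ L, (graphOf ω).Adj x u) ∧ (∀ x ∈ L', (graphOf ω).Adj x u) := by
        constructor
        · intro h
          exact ⟨fun x hx => h x (Finset.mem_union_left _ hx),
                 fun x hx => h x (Finset.mem_union_right _ hx)⟩
        · rintro ⟨ha, hb⟩ x hx
          rcases Finset.mem_union.mp hx with h | h
          · exact ha x h
          · exact hb x h
      rw [indAll, indAll, indAll, if_congr hiff rfl rfl]
      by_cases h1 : (∀ x ∈ L, (graphOf ω).Adj x u)
      · by_cases h2 : (∀ x ∈ L', (graphOf ω).Adj x u)
        · rw [if_pos h1, if_pos h2, if_pos ⟨h1, h2⟩]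
          try norm_num
        · rw [if_pos h1, if_neg h2, if_neg (fun h => h2 h.2)]
          try norm_num
      · rw [if_neg h1, zero_mul, if_neg (fun h => h1 h.1)]
    rw [hpt, Ex_indAll hp0 hp1 _ u (fun hmem => by
      rcases Finset.mem_union.mp hmem with h | h
      · exact huL L hL h
      · exact huL L' hL' h),
      Finset.card_union_of_disjoint hdLL, hk L hL, hk L' hL', two_mul]
  have e4 : ∑ z ∈ S.offDiag, Ex p (fun ω => indAll z.1 u ω * indAll z.2 u ω)
      = ((S.offDiag.card : ℝ)) * p ^ (2 * k) := by
    rw [Finset.sum_congr rfl e3, Finset.sum_const, nsmul_eq_mul]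
  rw [e2, e4] at step
  refine le_trans (le_of_eq ?_) step
  rw [Finset.offDiag_card]
  have hsub : S.card ≤ S.card * S.card := by
    rcases Nat.eq_zero_or_pos S.card with h | h
    · simp [h]
    · exact Nat.le_mul_of_pos_left _ h
  rw [Nat.cast_sub hsub]
  push_cast
  ring

end Xi

section Chernoff
variable {n : ℕ} {p : ℝ}

lemma blocks_disjoint {B U : Finset (Fin n)} (hU : Disjoint U B)
    {u v : Fin n} (hu : u ∈ U) (hv : v ∈ U) (huv : u ≠ v) :
    Disjoint (coordsOf B u) (coordsOf B v) := by
  rw [Finset.disjoint_left]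
  intro e he1 he2
  rcases Finset.mem_filter.mp he1 with ⟨-, x, hx, hex⟩
  rcases Finset.mem_filter.mp he2 with ⟨-, y, hy, hey⟩
  have h : s(x, u) = s(y, v) := hex ▸ hey ▸ rfl
  rw [Sym2.eq, Sym2.rel_iff'] at h
  rcases h with h | h
  · exact huv (congrArg Prod.snd h)
  · have : u = y := congrArg Prod.snd h
    exact Finset.disjoint_left.mp hU hu (this ▸ hy)

lemma detOn_comp {A : Finset (EdgeType n)} {f : (EdgeType n → Bool) → ℝ} (g : ℝ → ℝ)
    (hf : DetOn A f) : DetOn A (fun ω => g (f ω)) :=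
  fun ω ω' h => congrArg g (hf ω ω' h)

lemma Ex_exp_xi (hp0 : 0 ≤ p) (hp1 : p ≤ 1) {S : Finset (Finset (Fin n))} {u : Fin n}
    (t : ℝ) :
    Ex p (fun ω => Real.exp (-t * xiS S u ω))
      = 1 - (1 - Real.exp (-t)) * Ex p (xiS S u) := by
  classical
  have hpt : (fun ω => Real.exp (-t * xiS S u ω))
      = fun ω : EdgeType n → Bool => (fun _ : EdgeType n → Bool => (1:ℝ)) ω
          - (fun ω => (1 - Real.exp (-t)) * xiS S u ω) ω := by
    funext ω
    simp only [xiS]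
    split
    · rw [mul_one, mul_one]; ring
    · rw [mul_zero, mul_zero, Real.exp_zero]; ring
  rw [hpt, Ex_sub, Ex_const_mul, Ex_one hp0 hp1]

lemma chernoff_markov (hp0 : 0 ≤ p) (hp1 : p ≤ 1) (S : Finset (Finset (Fin n)))
    (U : Finset (Fin n)) (hU : Disjoint U (S.biUnion id)) (t a : ℝ) (ht : 0 ≤ t) :
    ∑ ω ∈ Finset.univ.filter (fun ω => (∑ u ∈ U, xiS S u ω) < a), wt p ω
      ≤ Real.exp (t * a) * ∏ u ∈ U, Ex p (fun ω => Real.exp (-t * xiS S u ω)) := by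
  classical
  have step1 : ∑ ω ∈ Finset.univ.filter (fun ω => (∑ u ∈ U, xiS S u ω) < a), wt p ω
      ≤ ∑ ω ∈ Finset.univ.filter (fun ω => (∑ u ∈ U, xiS S u ω) < a),
          wt p ω * Real.exp (t * (a - ∑ u ∈ U, xiS S u ω)) := by
    refine Finset.sum_le_sum fun ω hω => ?_
    rcases Finset.mem_filter.mp hω with ⟨-, hlt⟩
    have h1 : (1:ℝ) ≤ Real.exp (t * (a - ∑ u ∈ U, xiS S u ω)) :=
      Real.one_le_exp (mul_nonneg ht (by linarith))
    nlinarith [wt_nonneg hp0 hp1 ω]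
  have step2 : ∑ ω ∈ Finset.univ.filter (fun ω => (∑ u ∈ U, xiS S u ω) < a),
          wt p ω * Real.exp (t * (a - ∑ u ∈ U, xiS S u ω))
      ≤ ∑ ω : EdgeType n → Bool, wt p ω * Real.exp (t * (a - ∑ u ∈ U, xiS S u ω)) :=
    Finset.sum_le_sum_of_subset_of_nonneg (Finset.filter_subset _ _) fun ω _ _ =>
      mul_nonneg (wt_nonneg hp0 hp1 ω) (Real.exp_nonneg _)
  have step3 : ∑ ω : EdgeType n → Bool, wt p ω * Real.exp (t * (a - ∑ u ∈ U, xiS S u ω))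
      = Real.exp (t * a) * Ex p (fun ω => ∏ u ∈ U, Real.exp (-t * xiS S u ω)) := by
    rw [Ex, Finset.mul_sum]
    refine Finset.sum_congr rfl fun ω _ => ?_
    rw [← Real.exp_sum]
    have h2 : t * (a - ∑ u ∈ U, xiS S u ω) = t * a + ∑ u ∈ U, -t * xiS S u ω := by
      rw [show ∑ u ∈ U, -t * xiS S u ω = (-t) * ∑ u ∈ U, xiS S u ω from
        (Finset.mul_sum _ _ _).symm]
      ring
    rw [h2, Real.exp_add]
    ring
  have step4 : Ex p (fun ω => ∏ u ∈ U, Real.exp (-t * xiS S u ω))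
      = ∏ u ∈ U, Ex p (fun ω => Real.exp (-t * xiS S u ω)) :=
    Ex_prod_blocks hp0 hp1 (A := fun u => coordsOf (S.biUnion id) u) U
      (fun u hu v hv huv => blocks_disjoint hU hu hv huv)
      (fun u hu => detOn_comp (fun x => Real.exp (-t * x))
        (detOn_xiS (Finset.disjoint_left.mp hU hu)))
  calc ∑ ω ∈ Finset.univ.filter (fun ω => (∑ u ∈ U, xiS S u ω) < a), wt p ω
      ≤ ∑ ω : EdgeType n → Bool, wt p ω * Real.exp (t * (a - ∑ u ∈ U, xiS S u ω)) :=
        le_trans step1 step2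
    _ = Real.exp (t * a) * Ex p (fun ω => ∏ u ∈ U, Real.exp (-t * xiS S u ω)) := step3
    _ = Real.exp (t * a) * ∏ u ∈ U, Ex p (fun ω => Real.exp (-t * xiS S u ω)) := by rw [step4]

end Chernoff

section PerEvent
variable {n : ℕ} {p : ℝ}

lemma per_event_exp_bound (hp0 : 0 ≤ p) (hp1 : p ≤ 1)
    (S : Finset (Finset (Fin n))) (k : ℕ) (hk : ∀ L ∈ S, L.card = k)
    (hdisjS : ∀ L ∈ S, ∀ L' ∈ S, L ≠ L' → Disjoint L L')
    (U : Finset (Fin n)) (hU : Disjoint U (S.biUnion id))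
    (hβ : (S.card : ℝ) * p ^ k ≤ 1/100) :
    ∑ ω ∈ Finset.univ.filter
        (fun ω => (∑ u ∈ U, xiS S u ω) < (99/100) * ((S.card:ℝ) * p ^ k) * U.card), wt p ω
      ≤ Real.exp (-(1/160000) * ((S.card:ℝ) * p ^ k) * U.card) := by
  classical
  set β : ℝ := (S.card : ℝ) * p ^ k with hβdef
  have hβ0 : 0 ≤ β := mul_nonneg (Nat.cast_nonneg _) (pow_nonneg hp0 _)
  set t : ℝ := 1/400 with ht_def
  clear_value t
  have ht0 : (0:ℝ) ≤ t := by rw [ht_def]; norm_num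
  set a : ℝ := (99/100) * β * U.card with ha_def
  clear_value a
  -- Markov/Chernoff bound
  have hmain := chernoff_markov hp0 hp1 S U hU t a ht0
  -- bound each factor
  have hq : ∀ u ∈ U, (199/200) * β ≤ Ex p (xiS S u) := by
    intro u hu
    have hu' : u ∉ S.biUnion id := Finset.disjoint_left.mp hU hu
    have h1 := Ex_xiS_ge hp0 hp1 hk hdisjS hu'
    refine le_trans ?_ h1
    have h2 : ((S.card:ℝ) * S.card - S.card) * p ^ (2*k) ≤ β * β := by
      have h3 : ((S.card:ℝ) * S.card - S.card) ≤ (S.card:ℝ) * S.card := by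
        have : (0:ℝ) ≤ (S.card:ℝ) := Nat.cast_nonneg _
        linarith
      have h4 : (0:ℝ) ≤ p ^ (2*k) := pow_nonneg hp0 _
      have h5 : ((S.card:ℝ) * S.card - S.card) * p ^ (2*k)
          ≤ (S.card:ℝ) * S.card * p ^ (2*k) := by
        apply mul_le_mul_of_nonneg_right h3 h4
      have h6 : (S.card:ℝ) * S.card * p ^ (2*k) = β * β := by
        rw [hβdef, two_mul, pow_add]; ring
      linarith
    -- β - β²/2 ≥ (199/200) β  since β ≤ 1/100
    nlinarith [hβ0, hβ]
  have hq1 : ∀ u ∈ U, Ex p (xiS S u) ≤ 1 := by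
    intro u hu
    have := Ex_mono (n := n) hp0 hp1 (f := xiS S u) (g := fun _ => 1) (fun ω => xiS_le_one ω)
    rwa [Ex_one hp0 hp1] at this
  have hexp_t : Real.exp (-t) ≤ 1 - t + t^2 := by
    have h1 : 1 + t ≤ Real.exp t := by
      have := Real.add_one_le_exp t
      linarith
    have h2 : Real.exp (-t) = (Real.exp t)⁻¹ := Real.exp_neg t
    rw [h2]
    have h3 : (0:ℝ) < 1 + t := by rw [ht_def]; norm_num
    have h4 : (Real.exp t)⁻¹ ≤ (1 + t)⁻¹ := by
      apply inv_anti₀ h3 h1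
    refine le_trans h4 ?_
    rw [inv_le_iff_one_le_mul₀ h3]
    · nlinarith
  have hfac : ∀ u ∈ U, Ex p (fun ω => Real.exp (-t * xiS S u ω))
      ≤ Real.exp (-(1 - Real.exp (-t)) * ((199/200) * β)) := by
    intro u hu
    rw [Ex_exp_xi hp0 hp1]
    have hem : Real.exp (-t) ≤ 1 := by
      rw [Real.exp_le_one_iff]; linarith
    have he0 : 0 ≤ 1 - Real.exp (-t) := by linarith
    have hstep : 1 - (1 - Real.exp (-t)) * Ex p (xiS S u)
        ≤ 1 - (1 - Real.exp (-t)) * ((199/200) * β) := by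
      have := mul_le_mul_of_nonneg_left (hq u hu) he0
      linarith
    refine le_trans hstep ?_
    have := Real.add_one_le_exp (-(1 - Real.exp (-t)) * ((199/200) * β))
    linarith
  have hprod : ∏ u ∈ U, Ex p (fun ω => Real.exp (-t * xiS S u ω))
      ≤ ∏ u ∈ U, Real.exp (-(1 - Real.exp (-t)) * ((199/200) * β)) := by
    refine Finset.prod_le_prod (fun u hu => ?_) hfac
    exact Ex_nonneg hp0 hp1 (fun ω => Real.exp_nonneg _)
  rw [Finset.prod_const] at hprod
  have hcard : (Real.exp (-(1 - Real.exp (-t)) * ((199/200) * β))) ^ U.card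
      = Real.exp (-(1 - Real.exp (-t)) * ((199/200) * β) * U.card) := by
    rw [← Real.exp_nat_mul]
    ring_nf
  rw [hcard] at hprod
  have hfinal : Real.exp (t * a) * Real.exp (-(1 - Real.exp (-t)) * ((199/200) * β) * U.card)
      ≤ Real.exp (-(1/160000) * β * U.card) := by
    rw [← Real.exp_add, Real.exp_le_exp]
    have hU0 : (0:ℝ) ≤ (U.card : ℝ) := Nat.cast_nonneg _
    have key : t * ((99/100) * β) - (1 - Real.exp (-t)) * ((199/200) * β)
        ≤ -(1/160000) * β := by
      have h1m : t - t^2 ≤ 1 - Real.exp (-t) := by linarith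
      have h1m' : (399/160000 : ℝ) ≤ 1 - Real.exp (-t) := by
        have ht2 : t - t^2 = 399/160000 := by rw [ht_def]; norm_num
        linarith
      have hmul : (399/160000) * ((199/200) * β) ≤ (1 - Real.exp (-t)) * ((199/200) * β) :=
        mul_le_mul_of_nonneg_right h1m' (by linarith)
      have htv : t * ((99/100) * β) = (99/40000) * β := by rw [ht_def]; ring
      linarith [hβ0, hmul, htv]
    calc t * a + (-(1 - Real.exp (-t)) * ((199/200) * β) * U.card)
        = (t * ((99/100) * β) - (1 - Real.exp (-t)) * ((199/200) * β)) * U.card := by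
          rw [ha_def]; ring
      _ ≤ (-(1/160000) * β) * U.card := mul_le_mul_of_nonneg_right key hU0
      _ = -(1/160000) * β * U.card := by ring
  calc ∑ ω ∈ Finset.univ.filter
        (fun ω => (∑ u ∈ U, xiS S u ω) < a), wt p ω
      ≤ Real.exp (t * a) * ∏ u ∈ U, Ex p (fun ω => Real.exp (-t * xiS S u ω)) := hmain
    _ ≤ Real.exp (t * a) * Real.exp (-(1 - Real.exp (-t)) * ((199/200) * β) * U.card) := by
        apply mul_le_mul_of_nonneg_left hprod (Real.exp_nonneg _)
    _ ≤ Real.exp (-(1/160000) * β * U.card) := hfinal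

end PerEvent


section Bridge
variable {n : ℕ} {p : ℝ}

lemma coveredCount_eq_sum (S : Finset (Finset (Fin n))) (U : Finset (Fin n))
    (ω : EdgeType n → Bool) :
    ((coveredCount (graphOf ω) S U : ℕ) : ℝ) = ∑ u ∈ U, xiS S u ω := by
  classical
  rw [coveredCount]
  have h1 : {u ∈ (U : Set (Fin n)) | ∃ L ∈ S, ∀ x ∈ L, (graphOf ω).Adj x u}
      = ↑(U.filter (fun u => ∃ L ∈ S, ∀ x ∈ L, (graphOf ω).Adj x u)) := by
    ext u; simp
  rw [h1, Set.ncard_coe_finset, Finset.card_filter]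
  push_cast
  refine Finset.sum_congr rfl fun u hu => ?_
  rw [xiS]
  try (split <;> simp)

lemma rpow_half_eq {x : ℝ} (hx : 0 ≤ x) (k : ℕ) :
    x ^ ((k:ℝ)/2) = Real.sqrt x ^ k := by
  rw [show (k:ℝ)/2 = (1/2) * (k:ℝ) by ring, Real.rpow_mul hx, Real.rpow_natCast,
    ← Real.sqrt_eq_rpow]

end Bridge

noncomputable def CC : ℝ := 10 ^ 10

lemma CC_pos : (0:ℝ) < CC := by rw [CC]; norm_num
lemma CC_ge_one : (1:ℝ) ≤ CC := by rw [CC]; norm_num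

def groundK (n k : ℕ) : Finset (Finset (Fin n)) := Finset.univ.powersetCard k

open scoped Classical in
noncomputable def validS (n : ℕ) (k : ℕ) : Finset (Finset (Finset (Fin n))) :=
  (groundK n k).powerset.filter (fun S => S.Nonempty ∧
    (∀ L ∈ S, ∀ L' ∈ S, L ≠ L' → Disjoint L L') ∧
    ((S.card:ℝ) ≤ dlt / CC ^ k * ((n:ℝ) / Real.log n) ^ ((k:ℝ)/2)))

/-- the bad event for a given family and part -/
def badSet {n : ℕ} (V : Fin 7 → Finset (Fin n)) (S : Finset (Finset (Fin n)))
    (k : ℕ) (i : Fin 7) : Set (EdgeType n → Bool) :=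
  {ω | ((coveredCount (graphOf ω) S (V i)) : ℝ)
    < (1 - dlt) * CC ^ k * (Real.log n / n) ^ ((k:ℝ)/2) * S.card * (V i).card}

lemma not_P2a_subset_bad {n : ℕ} (V : Fin 7 → Finset (Fin n)) :
    {ω : EdgeType n → Bool | ¬ PropP2a CC V (graphOf ω)}
      ⊆ ⋃ k ∈ ({1, 2} : Finset ℕ), ⋃ S ∈ validS n k,
          ⋃ i ∈ Finset.univ.filter
            (fun i : Fin 7 => i ≠ 0 ∧ Disjoint (V i) (S.biUnion id)),
            badSet V S k i := by
  classical
  intro ω hω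
  simp only [Set.mem_setOf_eq, PropP2a, not_forall] at hω
  obtain ⟨k, hk, S, hcards, hdisj, hsize, i, hi0, hdisjV, hlt⟩ := hω
  rw [not_le] at hlt
  have hSne : S.Nonempty := by
    rcases Finset.eq_empty_or_nonempty S with rfl | h
    · exfalso
      simp only [Finset.card_empty, Nat.cast_zero, mul_zero, zero_mul] at hlt
      exact absurd hlt (not_lt.mpr (Nat.cast_nonneg _))
    · exact h
  have hSmem : S ∈ validS n k := by
    rw [validS, Finset.mem_filter, Finset.mem_powerset]
    refine ⟨fun L hL => ?_, hSne, hdisj, hsize⟩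
    rw [groundK, Finset.mem_powersetCard_univ]
    exact hcards L hL
  refine Set.mem_biUnion (show k ∈ ({1,2} : Finset ℕ) by simp [hk]) ?_
  refine Set.mem_biUnion hSmem ?_
  refine Set.mem_biUnion (Finset.mem_filter.mpr ⟨Finset.mem_univ i, hi0, hdisjV⟩) ?_
  exact hlt

lemma badSet_bound {n : ℕ} (hn3 : 3 ≤ n) (V : Fin 7 → Finset (Fin n))
    {k : ℕ} (hk : k = 1 ∨ k = 2) {S : Finset (Finset (Fin n))} (hS : S ∈ validS n k)
    {i : Fin 7} (hdisjV : Disjoint (V i) (S.biUnion id))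
    (hVi : ((V i).card : ℝ) = eps * n)
    (hp1 : CC * Real.sqrt (Real.log n / n) ≤ 1) :
    gnp n (CC * Real.sqrt (Real.log n / n)) (badSet V S k i)
      ≤ ENNReal.ofReal (Real.exp (-16 * S.card * Real.log n)) := by
  classical
  have hn0 : (0:ℝ) < n := by positivity
  have hn1 : (1:ℝ) < n := by
    have : (3:ℝ) ≤ n := by exact_mod_cast hn3
    linarith
  have hlog : 0 < Real.log n := Real.log_pos hn1
  set R : ℝ := Real.sqrt (Real.log n / n) with hRdef
  set p : ℝ := CC * R with hpdef
  have hR0 : 0 ≤ R := Real.sqrt_nonneg _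
  have hp0 : 0 ≤ p := mul_nonneg CC_pos.le hR0
  -- facts from validS
  rw [validS, Finset.mem_filter, Finset.mem_powerset] at hS
  obtain ⟨hSsub, hSne, hdisjS, hsize⟩ := hS
  have hcards : ∀ L ∈ S, L.card = k := fun L hL =>
    Finset.mem_powersetCard_univ.mp (hSsub hL)
  -- rpow conversions
  have hRk : (Real.log n / n) ^ ((k:ℝ)/2) = R ^ k :=
    rpow_half_eq (div_nonneg hlog.le hn0.le) k
  set Q : ℝ := Real.sqrt ((n:ℝ) / Real.log n) with hQdef
  have hQk : ((n:ℝ) / Real.log n) ^ ((k:ℝ)/2) = Q ^ k :=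
    rpow_half_eq (div_nonneg hn0.le hlog.le) k
  have hQR : Q * R = 1 := by
    rw [hQdef, hRdef, ← Real.sqrt_mul (div_nonneg hn0.le hlog.le)]
    rw [show (n:ℝ) / Real.log n * (Real.log n / n) = 1 by
      field_simp]
    exact Real.sqrt_one
  have hCCk : (0:ℝ) < CC ^ k := pow_pos CC_pos k
  have hpk : p ^ k = CC ^ k * R ^ k := mul_pow CC R k
  -- β ≤ 1/100
  have hβ : (S.card : ℝ) * p ^ k ≤ 1/100 := by
    rw [hQk] at hsize
    have h1 : (S.card : ℝ) * p ^ k ≤ (dlt / CC ^ k * Q ^ k) * p ^ k :=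
      mul_le_mul_of_nonneg_right hsize (pow_nonneg hp0 k)
    have h2 : (dlt / CC ^ k * Q ^ k) * p ^ k = dlt * (Q * R) ^ k := by
      rw [hpk, mul_pow]
      field_simp
    rw [h2, hQR, one_pow, mul_one] at h1
    refine le_trans h1 (by rw [dlt]; norm_num)
  -- threshold equality
  have hthresh : (1 - dlt) * CC ^ k * (Real.log n / n) ^ ((k:ℝ)/2) * S.card * (V i).card
      = 99/100 * ((S.card : ℝ) * p ^ k) * (V i).card := by
    rw [hRk, hpk, dlt]
    ring
  -- identify the event with a finset
  set a : ℝ := 99/100 * ((S.card : ℝ) * p ^ k) * (V i).card with ha_def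
  have hset : badSet V S k i
      = ↑(Finset.univ.filter (fun ω => (∑ u ∈ V i, xiS S u ω) < a)) := by
    ext ω
    simp only [badSet, Set.mem_setOf_eq, Finset.coe_filter, Finset.mem_univ, true_and]
    rw [hthresh, coveredCount_eq_sum, ha_def]
  rw [hset, gnp_finset hp0 hp1]
  apply ENNReal.ofReal_le_ofReal
  have hmain := per_event_exp_bound hp0 hp1 S k hcards hdisjS (V i) hdisjV hβ
  rw [ha_def]
  refine le_trans hmain ?_
  rw [Real.exp_le_exp]
  -- key exponent comparison
  have hpkn : CC * Real.log n ≤ p ^ k * n := by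
    rcases hk with rfl | rfl
    · rw [pow_one, hpdef]
      have h1 : R * n = Real.sqrt (Real.log n) * Real.sqrt n := by
        rw [hRdef, Real.sqrt_div hlog.le, div_mul_eq_mul_div, mul_div_assoc, Real.div_sqrt]
      have hle : Real.sqrt (Real.log n) ≤ Real.sqrt n :=
        Real.sqrt_le_sqrt (by nlinarith [Real.log_le_sub_one_of_pos hn0])
      have hRn : Real.log n ≤ R * n := by
        calc Real.log n = Real.sqrt (Real.log n) * Real.sqrt (Real.log n) :=
              (Real.mul_self_sqrt hlog.le).symm
          _ ≤ Real.sqrt (Real.log n) * Real.sqrt n :=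
              mul_le_mul_of_nonneg_left hle (Real.sqrt_nonneg _)
          _ = R * n := h1.symm
      calc CC * Real.log n ≤ CC * (R * n) := mul_le_mul_of_nonneg_left hRn CC_pos.le
        _ = CC * R * n := by ring
    · have h2 : p ^ 2 * n = CC ^ 2 * Real.log n := by
        rw [hpk, hRdef, Real.sq_sqrt (div_nonneg hlog.le hn0.le)]
        field_simp
      rw [h2]
      have h4 : CC * 1 ≤ CC * CC := mul_le_mul_of_nonneg_left CC_ge_one CC_pos.le
      have h5 : CC * 1 * Real.log n ≤ CC * CC * Real.log n :=
        mul_le_mul_of_nonneg_right h4 hlog.le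
      calc CC * Real.log n = CC * 1 * Real.log n := by ring
        _ ≤ CC * CC * Real.log n := h5
        _ = CC ^ 2 * Real.log n := by ring
  have hVi' : ((V i).card : ℝ) = n / 1000 := by
    rw [hVi, eps]; ring
  have hs0 : (0:ℝ) ≤ (S.card:ℝ) := Nat.cast_nonneg _
  have hfin : 16 * (S.card : ℝ) * Real.log n
      ≤ 1/160000 * ((S.card:ℝ) * p ^ k) * ((V i).card : ℝ) := by
    rw [hVi']
    have h3 : (S.card:ℝ) * (CC * Real.log n) ≤ (S.card:ℝ) * (p ^ k * n) :=
      mul_le_mul_of_nonneg_left hpkn hs0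
    have hCC : CC = 10^10 := rfl
    have h3' : (10:ℝ)^10 * ((S.card:ℝ) * Real.log n) ≤ (S.card:ℝ) * (p ^ k * n) := by
      rw [hCC] at h3
      linarith [h3]
    linarith [h3', mul_nonneg hs0 hlog.le]
  linarith

lemma sum_validS_bound {n : ℕ} (hn3 : 3 ≤ n) {k : ℕ} (hk2 : k ≤ 2) :
    ∑ S ∈ validS n k, Real.exp (-16 * S.card * Real.log n)
      ≤ 2 * (n:ℝ)^2 * Real.exp (-14 * Real.log n) := by
  classical
  have hn0 : (0:ℝ) < n := by positivity
  have hn1 : (1:ℕ) ≤ n := by omega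
  have hlog : 0 < Real.log n := Real.log_pos (by exact_mod_cast (by omega : 1 < n))
  set Nk := (groundK n k).card with hNk_def
  have hNk : (Nk:ℝ) ≤ (n:ℝ)^2 := by
    have h1 : Nk = n.choose k := by
      rw [hNk_def, groundK, Finset.card_powersetCard, Finset.card_univ, Fintype.card_fin]
    have h2 : n.choose k ≤ n ^ k := Nat.choose_le_pow n k
    have h3 : n ^ k ≤ n ^ 2 := Nat.pow_le_pow_right hn1 hk2
    rw [h1]
    exact_mod_cast le_trans h2 h3
  have hmaps : ∀ S ∈ validS n k, S.card ∈ Finset.range (Nk + 1) := by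
    intro S hS
    rw [Finset.mem_range, Nat.lt_succ_iff]
    rw [validS, Finset.mem_filter, Finset.mem_powerset] at hS
    exact Finset.card_le_card hS.1
  rw [← Finset.sum_fiberwise_of_maps_to hmaps
    (fun S => Real.exp (-16 * S.card * Real.log n))]
  have hterm : ∀ s ∈ Finset.range (Nk + 1),
      ∑ S ∈ (validS n k).filter (fun S => S.card = s),
        Real.exp (-16 * S.card * Real.log n) ≤ Real.exp (-14 * Real.log n) := by
    intro s hs
    rcases Nat.eq_zero_or_pos s with rfl | hs1
    · have hempty : (validS n k).filter (fun S => S.card = 0) = ∅ := by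
        rw [Finset.filter_eq_empty_iff]
        intro S hS
        rw [validS, Finset.mem_filter] at hS
        have := hS.2.1
        rw [← Finset.card_pos] at this
        omega
      rw [hempty, Finset.sum_empty]
      positivity
    · have hcong : ∑ S ∈ (validS n k).filter (fun S => S.card = s),
          Real.exp (-16 * S.card * Real.log n)
          = ((validS n k).filter (fun S => S.card = s)).card
            * Real.exp (-16 * s * Real.log n) := by
        rw [Finset.sum_congr rfl (fun S hS => by
          rw [(Finset.mem_filter.mp hS).2]), Finset.sum_const, nsmul_eq_mul]
      rw [hcong]
      have hcount : (((validS n k).filter (fun S => S.card = s)).card : ℝ)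
          ≤ ((n:ℝ)^2)^s := by
        have hsub : (validS n k).filter (fun S => S.card = s)
            ⊆ (groundK n k).powersetCard s := by
          intro S hS
          rcases Finset.mem_filter.mp hS with ⟨hS1, hS2⟩
          rw [validS, Finset.mem_filter, Finset.mem_powerset] at hS1
          rw [Finset.mem_powersetCard]
          exact ⟨hS1.1, hS2⟩
        have h1 := Finset.card_le_card hsub
        rw [Finset.card_powersetCard] at h1
        have h2 : Nk.choose s ≤ Nk ^ s := Nat.choose_le_pow Nk s
        have h3 : ((Nk:ℝ))^s ≤ ((n:ℝ)^2)^s := by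
          apply pow_le_pow_left₀ (Nat.cast_nonneg _) hNk
        calc (((validS n k).filter (fun S => S.card = s)).card : ℝ)
            ≤ ((Nk.choose s : ℕ) : ℝ) := by exact_mod_cast h1
          _ ≤ ((Nk ^ s : ℕ) : ℝ) := by exact_mod_cast h2
          _ = ((Nk : ℝ))^s := by push_cast; ring
          _ ≤ ((n:ℝ)^2)^s := h3
      have hpow : ((n:ℝ)^2)^s = Real.exp ((2*s) * Real.log n) := by
        have hbase : (n:ℝ)^2 = Real.exp (2 * Real.log n) := by
          rw [show (2:ℝ) * Real.log n = Real.log n + Real.log n by ring, Real.exp_add,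
            Real.exp_log hn0]
          ring
        rw [hbase, ← Real.exp_nat_mul]
        congr 1
        push_cast
        ring
      calc (((validS n k).filter (fun S => S.card = s)).card : ℝ)
            * Real.exp (-16 * s * Real.log n)
          ≤ ((n:ℝ)^2)^s * Real.exp (-16 * s * Real.log n) :=
            mul_le_mul_of_nonneg_right hcount (Real.exp_nonneg _)
        _ = Real.exp ((2*s) * Real.log n + (-16 * s * Real.log n)) := by
            rw [hpow, ← Real.exp_add]
        _ ≤ Real.exp (-14 * Real.log n) := by
            rw [Real.exp_le_exp]
            have hs1' : (1:ℝ) ≤ s := by exact_mod_cast hs1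
            nlinarith [hlog.le]
  calc ∑ s ∈ Finset.range (Nk + 1), ∑ S ∈ (validS n k).filter (fun S => S.card = s),
        Real.exp (-16 * S.card * Real.log n)
      ≤ ∑ s ∈ Finset.range (Nk + 1), Real.exp (-14 * Real.log n) :=
        Finset.sum_le_sum hterm
    _ = (Nk + 1) * Real.exp (-14 * Real.log n) := by
        rw [Finset.sum_const, Finset.card_range, nsmul_eq_mul]; push_cast; ring
    _ ≤ 2 * (n:ℝ)^2 * Real.exp (-14 * Real.log n) := by
        have h1 : (1:ℝ) ≤ (n:ℝ)^2 := by
          have : (1:ℝ) ≤ (n:ℝ) := by exact_mod_cast hn1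
          nlinarith
        have := Real.exp_nonneg (-14 * Real.log n)
        nlinarith [hNk]

lemma bad_total_bound {n : ℕ} (hn3 : 3 ≤ n) (V : Fin 7 → Finset (Fin n))
    (hVcard : ∀ i : Fin 7, i ≠ 0 → ((V i).card : ℝ) = eps * n)
    (hp1 : CC * Real.sqrt (Real.log n / n) ≤ 1) :
    gnp n (CC * Real.sqrt (Real.log n / n))
      {ω | ¬ PropP2a CC V (graphOf ω)} ≤ ENNReal.ofReal (28 / n) := by
  classical
  have hn0 : (0:ℝ) < n := by positivity
  have hn1 : (1:ℝ) ≤ n := by exact_mod_cast (by omega : 1 ≤ n)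
  set μ := gnp n (CC * Real.sqrt (Real.log n / n)) with hμ
  set B : ℝ := 2 * (n:ℝ)^2 * Real.exp (-14 * Real.log n) with hB
  have hB0 : 0 ≤ B := by positivity
  have step1 : μ {ω | ¬ PropP2a CC V (graphOf ω)}
      ≤ ∑ k ∈ ({1,2} : Finset ℕ), ∑ S ∈ validS n k,
          ∑ i ∈ Finset.univ.filter
            (fun i : Fin 7 => i ≠ 0 ∧ Disjoint (V i) (S.biUnion id)),
            μ (badSet V S k i) := by
    refine le_trans (measure_mono (not_P2a_subset_bad V)) ?_
    refine le_trans (measure_biUnion_finset_le _ _) (Finset.sum_le_sum fun k _ => ?_)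
    refine le_trans (measure_biUnion_finset_le _ _) (Finset.sum_le_sum fun S _ => ?_)
    exact measure_biUnion_finset_le _ _
  have step2 : ∀ k ∈ ({1,2} : Finset ℕ), ∀ S ∈ validS n k,
      ∑ i ∈ Finset.univ.filter
        (fun i : Fin 7 => i ≠ 0 ∧ Disjoint (V i) (S.biUnion id)),
        μ (badSet V S k i)
      ≤ 7 * ENNReal.ofReal (Real.exp (-16 * S.card * Real.log n)) := by
    intro k hk S hS
    have hk' : k = 1 ∨ k = 2 := by
      rcases Finset.mem_insert.mp hk with h | h
      · exact Or.inl h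
      · exact Or.inr (Finset.mem_singleton.mp h)
    have hbound : ∀ i ∈ Finset.univ.filter
        (fun i : Fin 7 => i ≠ 0 ∧ Disjoint (V i) (S.biUnion id)),
        μ (badSet V S k i) ≤ ENNReal.ofReal (Real.exp (-16 * S.card * Real.log n)) := by
      intro i hi
      rcases Finset.mem_filter.mp hi with ⟨-, hi0, hdisjV⟩
      exact badSet_bound hn3 V hk' hS hdisjV (hVcard i hi0) hp1
    refine le_trans (Finset.sum_le_sum hbound) ?_
    rw [Finset.sum_const, nsmul_eq_mul]
    refine mul_le_mul_left ?_ _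
    have h7 : (Finset.univ.filter
        (fun i : Fin 7 => i ≠ 0 ∧ Disjoint (V i) (S.biUnion id))).card ≤ 7 := by
      refine le_trans (Finset.card_filter_le _ _) ?_
      simp
    exact_mod_cast Nat.cast_le.mpr h7
  have step3 : ∀ k ∈ ({1,2} : Finset ℕ), ∑ S ∈ validS n k,
      (7 : ENNReal) * ENNReal.ofReal (Real.exp (-16 * S.card * Real.log n))
      ≤ 7 * ENNReal.ofReal B := by
    intro k hk
    have hk2 : k ≤ 2 := by
      rcases Finset.mem_insert.mp hk with h | h
      · omega
      · rw [Finset.mem_singleton.mp h]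
    rw [← Finset.mul_sum]
    refine mul_le_mul_right ?_ _
    rw [← ENNReal.ofReal_sum_of_nonneg (fun S _ => Real.exp_nonneg _)]
    exact ENNReal.ofReal_le_ofReal (le_trans (sum_validS_bound hn3 hk2) (le_refl B))
  have step4 : μ {ω | ¬ PropP2a CC V (graphOf ω)} ≤ 14 * ENNReal.ofReal B := by
    refine le_trans step1 ?_
    have h1 : ∑ k ∈ ({1,2} : Finset ℕ), ∑ S ∈ validS n k,
        ∑ i ∈ Finset.univ.filter
          (fun i : Fin 7 => i ≠ 0 ∧ Disjoint (V i) (S.biUnion id)),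
          μ (badSet V S k i)
        ≤ ∑ k ∈ ({1,2} : Finset ℕ), (7 : ENNReal) * ENNReal.ofReal B := by
      refine Finset.sum_le_sum fun k hk => ?_
      exact le_trans (Finset.sum_le_sum (step2 k hk)) (step3 k hk)
    refine le_trans h1 ?_
    rw [Finset.sum_pair (by norm_num : (1:ℕ) ≠ 2)]
    rw [show (14 : ENNReal) = 7 + 7 from by norm_num, add_mul]
    try exact le_rfl
  refine le_trans step4 ?_
  have hBle : 14 * B ≤ 28 / n := by
    have hexp : Real.exp (-14 * Real.log n) = ((n:ℝ)^14)⁻¹ := by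
      rw [show (-14:ℝ) * Real.log n = -(((14:ℕ):ℝ) * Real.log n) by push_cast; ring,
        Real.exp_neg, Real.exp_nat_mul, Real.exp_log hn0]
    rw [hB, hexp]
    have h1 : (n:ℝ)^2 * ((n:ℝ)^14)⁻¹ ≤ ((n:ℝ))⁻¹ := by
      have h2 : (n:ℝ)^2 * ((n:ℝ)^14)⁻¹ = ((n:ℝ)^12)⁻¹ := by
        field_simp
      rw [h2]
      have h3 : (n:ℝ) ≤ (n:ℝ)^12 := le_self_pow₀ hn1 (by norm_num)
      exact inv_anti₀ hn0 h3
    calc 14 * (2 * (n:ℝ)^2 * ((n:ℝ)^14)⁻¹) = 28 * ((n:ℝ)^2 * ((n:ℝ)^14)⁻¹) := by ring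
      _ ≤ 28 * ((n:ℝ))⁻¹ := by linarith
      _ = 28 / n := by rw [div_eq_mul_inv]
  have heq : (14 : ENNReal) * ENNReal.ofReal B = ENNReal.ofReal (14 * B) := by
    rw [ENNReal.ofReal_mul (by norm_num : (0:ℝ) ≤ 14), ENNReal.ofReal_ofNat]
  rw [heq]
  exact ENNReal.ofReal_le_ofReal hBle

lemma p_le_one {n : ℕ} (hn : 4 * (10:ℝ)^40 ≤ (n:ℝ)) :
    CC * Real.sqrt (Real.log n / n) ≤ 1 := by
  have hx1 : (1:ℝ) < (n:ℝ) := by nlinarith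
  have hx0 : (0:ℝ) < (n:ℝ) := by linarith
  have hlog0 : 0 ≤ Real.log n := Real.log_nonneg hx1.le
  have hsqrt0 : 0 < Real.sqrt n := Real.sqrt_pos.mpr hx0
  have hsq : 2 * (10:ℝ)^20 ≤ Real.sqrt n := by
    have h1 : ((2 * (10:ℝ)^20))^2 ≤ (n:ℝ) := by nlinarith
    rw [show (2*(10:ℝ)^20) = Real.sqrt ((2*(10:ℝ)^20)^2) from (Real.sqrt_sq (by norm_num)).symm]
    exact Real.sqrt_le_sqrt h1
  have hlogx : Real.log n ≤ 2 * Real.sqrt n := by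
    have h1 : Real.log (Real.sqrt n) = Real.log n / 2 := Real.log_sqrt hx0.le
    have h2 : Real.log (Real.sqrt n) ≤ Real.sqrt n - 1 :=
      Real.log_le_sub_one_of_pos hsqrt0
    linarith
  have hdiv : Real.log n / n ≤ 2 / Real.sqrt n := by
    have hxx : (n:ℝ) = Real.sqrt n * Real.sqrt n := (Real.mul_self_sqrt hx0.le).symm
    rw [div_le_div_iff₀ hx0 hsqrt0]
    calc Real.log n * Real.sqrt n ≤ (2 * Real.sqrt n) * Real.sqrt n :=
          mul_le_mul_of_nonneg_right hlogx hsqrt0.le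
      _ = 2 * (Real.sqrt n * Real.sqrt n) := by ring
      _ = 2 * n := by rw [← hxx]
  have hCCsq : CC * CC * (Real.log n / n) ≤ 1 := by
    have h1 : CC * CC * (Real.log n / n) ≤ CC * CC * (2 / Real.sqrt n) := by
      exact mul_le_mul_of_nonneg_left hdiv (mul_nonneg CC_pos.le CC_pos.le)
    refine le_trans h1 ?_
    rw [CC]
    have h2 : (10:ℝ)^10 * 10^10 * (2 / Real.sqrt n) = (2 * 10^20) / Real.sqrt n := by
      ring
    rw [h2, div_le_one hsqrt0]
    linarith [hsq]
  have hfin : (CC * Real.sqrt (Real.log n / n))^2 ≤ 1 := by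
    rw [mul_pow, Real.sq_sqrt (div_nonneg hlog0 hx0.le)]
    calc CC^2 * (Real.log n / n) = CC * CC * (Real.log n / n) := by ring
      _ ≤ 1 := hCCsq
  nlinarith [mul_nonneg CC_pos.le (Real.sqrt_nonneg (Real.log n / n)), hfin]


theorem stmt8 :
    ∃ C : ℝ, 0 < C ∧
      ∀ V : (m : ℕ) → Fin 7 → Finset (Fin (1000 * m)),
        (∀ m : ℕ, IsPartitionV (1000 * m) (V m)) →
        Filter.Tendsto
          (fun m : ℕ =>
            gnp (1000 * m)
              (C * Real.sqrt (Real.log (1000 * m : ℕ) / (1000 * m : ℕ)))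
              {ω | PropP2a C (V m) (graphOf ω)})
          Filter.atTop (nhds 1) := by
  classical
  refine ⟨CC, CC_pos, fun V hpart => ?_⟩
  -- eventual bounds
  have hev : ∀ᶠ m in Filter.atTop,
      ENNReal.ofReal (1 - 28 / ((1000 * m : ℕ) : ℝ))
        ≤ gnp (1000 * m) (CC * Real.sqrt (Real.log (1000 * m : ℕ) / (1000 * m : ℕ)))
            {ω | PropP2a CC (V m) (graphOf ω)}
      ∧ gnp (1000 * m) (CC * Real.sqrt (Real.log (1000 * m : ℕ) / (1000 * m : ℕ)))
            {ω | PropP2a CC (V m) (graphOf ω)} ≤ 1 := by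
    rw [Filter.eventually_atTop]
    refine ⟨10 ^ 38, fun m hm => ?_⟩
    set n : ℕ := 1000 * m with hn_def
    have hnR : 4 * (10:ℝ)^40 ≤ (n:ℝ) := by
      have : (10:ℕ)^38 ≤ m := hm
      have h1 : (10:ℝ)^38 ≤ (m:ℝ) := by exact_mod_cast this
      have h2 : (n:ℝ) = 1000 * (m:ℝ) := by rw [hn_def]; push_cast; ring
      nlinarith
    have hn3 : 3 ≤ n := by
      have : (3:ℝ) ≤ (n:ℝ) := by nlinarith
      exact_mod_cast this
    have hp1 : CC * Real.sqrt (Real.log n / n) ≤ 1 := p_le_one hnR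
    have hp0 : 0 ≤ CC * Real.sqrt (Real.log n / n) :=
      mul_nonneg CC_pos.le (Real.sqrt_nonneg _)
    have hVcard : ∀ i : Fin 7, i ≠ 0 → (((V m) i).card : ℝ) = eps * n :=
      fun i hi => (hpart m).2.2.1 i hi
    have hbad := bad_total_bound hn3 (V m) hVcard hp1
    set μ := gnp n (CC * Real.sqrt (Real.log n / n)) with hμ_def
    have huniv : μ Set.univ = 1 := gnp_univ hp0 hp1
    constructor
    · -- lower bound
      have hcompl : {ω : EdgeType n → Bool | PropP2a CC (V m) (graphOf ω)}
          = {ω | ¬ PropP2a CC (V m) (graphOf ω)}ᶜ := by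
        ext ω; simp; exact not_not.symm
      have hle1 : (1 : ENNReal) ≤ μ {ω | ¬ PropP2a CC (V m) (graphOf ω)}
          + μ {ω | PropP2a CC (V m) (graphOf ω)} := by
        rw [← huniv]
        refine le_trans (measure_mono ?_) (measure_union_le _ _)
        intro ω _
        by_cases h : PropP2a CC (V m) (graphOf ω)
        · exact Or.inr h
        · exact Or.inl h
      have h28 : (0:ℝ) ≤ 28 / (n:ℝ) := by positivity
      have h28' : 28 / (n:ℝ) ≤ 1 := by
        rw [div_le_one (by nlinarith : (0:ℝ) < (n:ℝ))]
        nlinarith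
      have hsum : ENNReal.ofReal (1 - 28 / (n:ℝ)) + ENNReal.ofReal (28 / (n:ℝ))
          = 1 := by
        rw [← ENNReal.ofReal_add (by linarith) h28]
        norm_num
      have hle2 : ENNReal.ofReal (1 - 28 / (n:ℝ)) + ENNReal.ofReal (28 / (n:ℝ))
          ≤ μ {ω | PropP2a CC (V m) (graphOf ω)} + ENNReal.ofReal (28 / (n:ℝ)) := by
        rw [hsum]
        refine le_trans hle1 ?_
        rw [add_comm]
        exact add_le_add le_rfl hbad
      exact (ENNReal.add_le_add_iff_right ENNReal.ofReal_ne_top).mp hle2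
    · rw [← huniv]
      exact measure_mono (Set.subset_univ _)
  -- squeeze
  have hlow : Filter.Tendsto (fun m : ℕ => ENNReal.ofReal (1 - 28 / ((1000 * m : ℕ) : ℝ)))
      Filter.atTop (nhds 1) := by
    have hreal : Filter.Tendsto (fun m : ℕ => 1 - 28 / ((1000 * m : ℕ) : ℝ))
        Filter.atTop (nhds 1) := by
      have h1 : Filter.Tendsto (fun m : ℕ => ((1000 * m : ℕ) : ℝ))
          Filter.atTop Filter.atTop := by
        have : Filter.Tendsto (fun m : ℕ => (1000 : ℝ) * (m : ℝ))
            Filter.atTop Filter.atTop :=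
          (tendsto_natCast_atTop_atTop).const_mul_atTop (by norm_num)
        refine this.congr fun m => by push_cast; ring
      have h2 : Filter.Tendsto (fun m : ℕ => 28 / ((1000 * m : ℕ) : ℝ))
          Filter.atTop (nhds 0) := h1.const_div_atTop 28
      have h3 := Filter.Tendsto.const_sub (1:ℝ) h2
      simpa using h3
    have := (ENNReal.continuous_ofReal.tendsto 1).comp hreal
    simpa [Function.comp_def] using this
  exact tendsto_of_tendsto_of_tendsto_of_le_of_le' hlow tendsto_const_nhds
    (hev.mono fun m h => h.1) (hev.mono fun m h => h.2)
end

section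
/- There exists a positive constant C such that, if p = C((log n)/n)^{1/2}, then asymptotically almost surely the random graph G(n,p) on V satisfies: for every k ∈ {1,2}, every collection 𝒮 of pairwise disjoint k-element subsets of V with |𝒮| ≥ ((log n)/C^{k−1})(n/log n)^{k/2}, and every U ⊆ V with U ∩ ⋃_{L∈𝒮} L = ∅ and |U| ≥ ((log n)/C^{k−1})(n/log n)^{k/2}, the bipartite graph B(𝒮,U) has at least one edge. -/
open MeasureTheory
open scoped ENNReal

section AuxSB
open scoped ENNReal

lemma bb_true (p : ℝ) : bernoulliBool p {true} = ENNReal.ofReal p := by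
  simp [bernoulliBool]

lemma bb_false (p : ℝ) : bernoulliBool p {false} = ENNReal.ofReal (1 - p) := by
  simp [bernoulliBool]

lemma bb_univ (p : ℝ) (h0 : 0 ≤ p) (h1 : p ≤ 1) : bernoulliBool p Set.univ = 1 := by
  simp only [bernoulliBool, Measure.add_apply, Measure.smul_apply, Measure.dirac_apply_of_mem (Set.mem_univ _), smul_eq_mul, mul_one]
  rw [← ENNReal.ofReal_add h0 (by linarith)]
  norm_num

lemma bb_prob (p : ℝ) (h0 : 0 ≤ p) (h1 : p ≤ 1) : IsProbabilityMeasure (bernoulliBool p) :=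
  ⟨bb_univ p h0 h1⟩

lemma singleton_eq_pi {ι : Type*} {β : ι → Type*} (g : ∀ i, β i) :
    ({g} : Set (∀ i, β i)) = Set.univ.pi fun i => {g i} := by
  ext ω; simp [funext_iff, Set.mem_pi]

lemma pi_singleton {ι : Type*} [Fintype ι] {β : ι → Type*} [∀ i, MeasurableSpace (β i)]
    (ν : ∀ i, Measure (β i)) [∀ i, IsProbabilityMeasure (ν i)] (g : ∀ i, β i) :
    Measure.pi ν {g} = ∏ i, ν i {g i} := by
  rw [singleton_eq_pi, Measure.pi_pi]

lemma map_pi_group {ι κ σ : Type*} [Fintype ι] [Fintype κ] [Fintype σ]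
    (ν : Measure Bool) [IsProbabilityMeasure ν]
    (b : κ → σ → ι) (hb : Function.Injective (fun js : κ × σ => b js.1 js.2)) :
    Measure.map (fun (ω : ι → Bool) (j : κ) (s : σ) => ω (b j s))
      (Measure.pi fun _ : ι => ν) = Measure.pi fun _ : κ => Measure.pi fun _ : σ => ν := by
  have hmeas : Measurable (fun (ω : ι → Bool) (j : κ) (s : σ) => ω (b j s)) :=
    measurable_pi_lambda _ fun j => measurable_pi_lambda _ fun s => measurable_pi_apply _
  rw [Measure.ext_iff_singleton]
  intro g
  rw [Measure.map_apply hmeas (measurableSet_singleton g)]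
  have hpre : (fun (ω : ι → Bool) (j : κ) (s : σ) => ω (b j s)) ⁻¹' {g}
      = Set.univ.pi fun i => {x | ∀ j s, b j s = i → g j s = x} := by
    ext ω
    simp only [Set.mem_preimage, Set.mem_singleton_iff, funext_iff, Set.mem_pi, Set.mem_univ,
      forall_true_left, Set.mem_setOf_eq]
    constructor
    · rintro h i j s rfl; exact (h j s).symm
    · intro h j s; exact (h (b j s) j s rfl).symm
  rw [hpre, Measure.pi_pi]
  have himg : ∀ p : κ × σ,
      {x | ∀ j s, b j s = b p.1 p.2 → g j s = x} = ({g p.1 p.2} : Set Bool) := by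
    intro p
    ext x
    simp only [Set.mem_setOf_eq, Set.mem_singleton_iff]
    constructor
    · intro h; exact (h p.1 p.2 rfl).symm
    · rintro rfl j s h
      have := hb (a₁ := (j, s)) (a₂ := p) h
      simp [← this]
  classical
  have hsplit : ∏ i, ν {x | ∀ j s, b j s = i → g j s = x}
      = ∏ p : κ × σ, ν {g p.1 p.2} := by
    have h1 : ∏ i, ν {x | ∀ j s, b j s = i → g j s = x}
        = ∏ i ∈ Finset.univ.image (fun p : κ × σ => b p.1 p.2),
            ν {x | ∀ j s, b j s = i → g j s = x} := by
      refine (Finset.prod_subset (Finset.subset_univ _) ?_).symm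
      intro i _ hi
      simp only [Finset.mem_image, Finset.mem_univ, true_and] at hi
      have : {x | ∀ j s, b j s = i → g j s = x} = Set.univ := by
        ext x
        simp only [Set.mem_setOf_eq, Set.mem_univ, iff_true]
        intro j s h; exact absurd ⟨(j, s), h⟩ hi
      rw [this]; exact measure_univ
    rw [h1, Finset.prod_image (fun p _ q _ h => hb h)]
    exact Finset.prod_congr rfl fun p _ => by rw [himg p]
  rw [hsplit, Fintype.prod_prod_type, pi_singleton]
  exact Finset.prod_congr rfl fun j _ => by rw [pi_singleton]

lemma measurableSet_of_finite {α : Type*} [MeasurableSpace α] [Finite α]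
    [MeasurableSingletonClass α] (s : Set α) : MeasurableSet s :=
  s.toFinite.measurableSet

lemma measure_group_event {ι κ σ : Type*} [Fintype ι] [Fintype κ] [Fintype σ]
    (ν : Measure Bool) [IsProbabilityMeasure ν]
    (b : κ → σ → ι) (hb : Function.Injective (fun js : κ × σ => b js.1 js.2))
    (Q : Set (σ → Bool)) :
    Measure.pi (fun _ : ι => ν) {ω | ∀ j, (fun s => ω (b j s)) ∈ Q}
      = (Measure.pi fun _ : σ => ν) Q ^ Fintype.card κ := by
  have hmeas : Measurable (fun (ω : ι → Bool) (j : κ) (s : σ) => ω (b j s)) :=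
    measurable_pi_lambda _ fun j => measurable_pi_lambda _ fun s => measurable_pi_apply _
  have hev : {ω : ι → Bool | ∀ j, (fun s => ω (b j s)) ∈ Q}
      = (fun (ω : ι → Bool) (j : κ) (s : σ) => ω (b j s)) ⁻¹' (Set.univ.pi fun _ => Q) := by
    ext ω; simp [Set.mem_pi]
  rw [hev, ← Measure.map_apply hmeas (measurableSet_of_finite _), map_pi_group ν b hb,
    Measure.pi_pi]
  simp [Finset.prod_const]

lemma measure_not_all_true {σ : Type*} [Fintype σ] (p : ℝ) (h0 : 0 ≤ p) (h1 : p ≤ 1) :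
    (Measure.pi fun _ : σ => bernoulliBool p) {f | ¬ ∀ s, f s = true}
      = 1 - ENNReal.ofReal p ^ Fintype.card σ := by
  have := bb_prob p h0 h1
  have hc : {f : σ → Bool | ¬ ∀ s, f s = true} = {f : σ → Bool | ∀ s, f s = true}ᶜ := rfl
  have hall : (Measure.pi fun _ : σ => bernoulliBool p) {f | ∀ s, f s = true}
      = ENNReal.ofReal p ^ Fintype.card σ := by
    have : {f : σ → Bool | ∀ s, f s = true} = Set.univ.pi fun _ => ({true} : Set Bool) := by
      ext f; simp [Set.mem_pi]
    rw [this, Measure.pi_pi]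
    simp [bb_true, Finset.prod_const]
  rw [hc, prob_compl_eq_one_sub (measurableSet_of_finite _), hall]

lemma measure_bad_le (n k : ℕ) (p : ℝ) (h0 : 0 ≤ p) (h1 : p ≤ 1)
    (S : Finset (Finset (Fin n))) (U : Finset (Fin n))
    (hS : ∀ L ∈ S, L.card = k)
    (hd : ∀ L ∈ S, ∀ L' ∈ S, L ≠ L' → Disjoint L L')
    (hU : Disjoint U (S.biUnion id)) :
    gnp n p {ω | ¬ ∃ L ∈ S, ∃ u ∈ U, ∀ x ∈ L, (graphOf ω).Adj x u}
      ≤ (1 - ENNReal.ofReal p ^ k) ^ (S.card * U.card) := by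
  have := bb_prob p h0 h1
  -- membership helpers
  have hmemL : ∀ j : {x // x ∈ S ×ˢ U}, j.1.1 ∈ S := fun j => (Finset.mem_product.1 j.2).1
  have hmemU : ∀ j : {x // x ∈ S ×ˢ U}, j.1.2 ∈ U := fun j => (Finset.mem_product.1 j.2).2
  have hbi : ∀ (j : {x // x ∈ S ×ˢ U}) (x : Fin n), x ∈ j.1.1 → x ∈ S.biUnion id :=
    fun j x hx => Finset.mem_biUnion.2 ⟨j.1.1, hmemL j, hx⟩
  have hne : ∀ (j : {x // x ∈ S ×ˢ U}) (x : Fin n), x ∈ j.1.1 → x ≠ j.1.2 := by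
    intro j x hx h
    exact Finset.disjoint_right.1 hU (hbi j x hx) (h ▸ hmemU j)
  -- the element map
  let elt : ∀ j : {x // x ∈ S ×ˢ U}, Fin k → Fin n :=
    fun j i => (j.1.1.orderIsoOfFin (hS _ (hmemL j)) i : Fin n)
  have helt : ∀ j i, elt j i ∈ j.1.1 := fun j i => (j.1.1.orderIsoOfFin (hS _ (hmemL j)) i).2
  have hndiag : ∀ j i, ¬ s(elt j i, j.1.2).IsDiag := by
    intro j i h
    exact hne j _ (helt j i) (Sym2.isDiag_iff_proj_eq.1 h)
  let b : {x // x ∈ S ×ˢ U} → Fin k → EdgeType n :=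
    fun j i => ⟨s(elt j i, j.1.2), hndiag j i⟩
  have hbinj : Function.Injective (fun js : {x // x ∈ S ×ˢ U} × Fin k => b js.1 js.2) := by
    rintro ⟨j, i⟩ ⟨j', i'⟩ h
    simp only [b, Subtype.mk.injEq, Sym2.eq_iff, Prod.mk.injEq, Prod.swap_prod_mk] at h
    have hxx : elt j i = elt j' i' ∧ j.1.2 = j'.1.2 := by
      rcases h with ⟨h1, h2⟩ | ⟨h1, h2⟩
      · exact ⟨h1, h2⟩
      · exact absurd (h1 ▸ hbi j _ (helt j i)) (Finset.disjoint_left.1 hU (hmemU j'))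
    obtain ⟨he, hu⟩ := hxx
    have hLL : j.1.1 = j'.1.1 := by
      by_contra hne'
      exact Finset.disjoint_left.1 (hd _ (hmemL j) _ (hmemL j') hne') (helt j i)
        (he ▸ helt j' i')
    have hjj : j = j' := Subtype.ext (Prod.ext_iff.2 ⟨hLL, hu⟩)
    subst hjj
    refine Prod.ext_iff.2 ⟨rfl, ?_⟩
    exact (j.1.1.orderIsoOfFin (hS _ (hmemL j))).injective (Subtype.coe_injective he)
  have hsub : {ω : EdgeType n → Bool | ¬ ∃ L ∈ S, ∃ u ∈ U, ∀ x ∈ L, (graphOf ω).Adj x u}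
      ⊆ {ω | ∀ j : {x // x ∈ S ×ˢ U},
          (fun i => ω (b j i)) ∈ {f : Fin k → Bool | ¬ ∀ i, f i = true}} := by
    intro ω hω j hall
    apply hω
    refine ⟨j.1.1, hmemL j, j.1.2, hmemU j, ?_⟩
    intro x hx
    obtain ⟨i, hi⟩ : ∃ i, elt j i = x :=
      ⟨(j.1.1.orderIsoOfFin (hS _ (hmemL j))).symm ⟨x, hx⟩,
        congrArg Subtype.val ((j.1.1.orderIsoOfFin (hS _ (hmemL j))).apply_symm_apply ⟨x, hx⟩)⟩
    subst hi
    show (SimpleGraph.fromEdgeSet _).Adj _ _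
    rw [SimpleGraph.fromEdgeSet_adj]
    exact ⟨⟨hndiag j i, hall i⟩, hne j _ (helt j i)⟩
  calc gnp n p {ω | ¬ ∃ L ∈ S, ∃ u ∈ U, ∀ x ∈ L, (graphOf ω).Adj x u}
      ≤ gnp n p {ω | ∀ j : {x // x ∈ S ×ˢ U},
          (fun i => ω (b j i)) ∈ {f : Fin k → Bool | ¬ ∀ i, f i = true}} :=
        measure_mono hsub
    _ = ((Measure.pi fun _ : Fin k => bernoulliBool p) {f | ¬ ∀ i, f i = true})
          ^ Fintype.card {x // x ∈ S ×ˢ U} := measure_group_event _ b hbinj _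
    _ = (1 - ENNReal.ofReal p ^ k) ^ (S.card * U.card) := by
        have hcard : Fintype.card {x // x ∈ S ×ˢ U} = S.card * U.card := by
          rw [Fintype.card_coe, Finset.card_product]
        rw [measure_not_all_true p h0 h1, Fintype.card_fin, hcard]

noncomputable def sthr (n k : ℕ) : ℕ :=
  ⌈Real.log n / 100 ^ (k - 1) * ((n : ℝ) / Real.log n) ^ ((k : ℝ) / 2)⌉₊

-- key computation : p^k * sthr ≥ 100 log n
lemma key_comp (n k : ℕ) (hk : k = 1 ∨ k = 2) (hn : 3 ≤ n) :
    100 * Real.log n ≤ (100 * Real.sqrt (Real.log n / n)) ^ k * (sthr n k : ℝ) := by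
  have hn0 : (0:ℝ) < n := by positivity
  have ha : 0 < Real.log n := Real.log_pos (by exact_mod_cast by omega)
  have hp0 : (0:ℝ) ≤ 100 * Real.sqrt (Real.log n / n) := by positivity
  rcases hk with rfl | rfl
  · have ht : Real.log n / 100 ^ (1 - 1) * ((n : ℝ) / Real.log n) ^ (((1:ℕ) : ℝ) / 2)
        = Real.log n * Real.sqrt ((n : ℝ) / Real.log n) := by
      rw [Nat.cast_one, Real.sqrt_eq_rpow]
      norm_num
    have hle : Real.log n / 100 ^ (1 - 1) * ((n : ℝ) / Real.log n) ^ (((1:ℕ) : ℝ) / 2)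
        ≤ (sthr n 1 : ℝ) := Nat.le_ceil _
    rw [ht] at hle
    have hkey : (100 * Real.sqrt (Real.log n / n)) * (Real.log n * Real.sqrt ((n : ℝ) / Real.log n))
        = 100 * Real.log n := by
      rw [show (100 : ℝ) * Real.sqrt (Real.log n / n) * (Real.log n * Real.sqrt ((n : ℝ) / Real.log n))
          = 100 * Real.log n * (Real.sqrt (Real.log n / n) * Real.sqrt ((n : ℝ) / Real.log n)) by ring,
        ← Real.sqrt_mul (by positivity)]
      rw [show Real.log n / n * ((n : ℝ) / Real.log n) = 1 by field_simp]
      simp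
    calc 100 * Real.log n = (100 * Real.sqrt (Real.log n / n))
          * (Real.log n * Real.sqrt ((n : ℝ) / Real.log n)) := hkey.symm
      _ ≤ (100 * Real.sqrt (Real.log n / n)) * (sthr n 1 : ℝ) := by
          apply mul_le_mul_of_nonneg_left hle hp0
      _ = (100 * Real.sqrt (Real.log n / n)) ^ 1 * (sthr n 1 : ℝ) := by ring
  · have ht : Real.log n / 100 ^ (2 - 1) * ((n : ℝ) / Real.log n) ^ (((2:ℕ) : ℝ) / 2)
        = Real.log n / 100 * ((n : ℝ) / Real.log n) := by
      norm_num
    have hle : Real.log n / 100 * ((n : ℝ) / Real.log n) ≤ (sthr n 2 : ℝ) := ht ▸ Nat.le_ceil _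
    have hsq : (100 * Real.sqrt (Real.log n / n)) ^ 2 = 10000 * (Real.log n / n) := by
      rw [mul_pow, Real.sq_sqrt (by positivity)]
      norm_num
    calc 100 * Real.log n
        = 10000 * (Real.log n / n) * (Real.log n / 100 * ((n : ℝ) / Real.log n)) := by
          field_simp; ring
      _ ≤ 10000 * (Real.log n / n) * (sthr n 2 : ℝ) := by
          apply mul_le_mul_of_nonneg_left hle (by positivity)
      _ = (100 * Real.sqrt (Real.log n / n)) ^ 2 * (sthr n 2 : ℝ) := by rw [hsq]
lemma sthr_pos (n k : ℕ) (hk : k = 1 ∨ k = 2) (hn : 3 ≤ n) : 1 ≤ sthr n k := by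
  have hn0 : (0:ℝ) < n := by positivity
  have ha : 0 < Real.log n := Real.log_pos (by exact_mod_cast by omega)
  apply Nat.one_le_ceil_iff.2
  positivity

open Classical in
noncomputable def badPairs (n k : ℕ) : Finset ((Finset (Finset (Fin n))) × Finset (Fin n)) :=
  ((Finset.univ.powersetCard k).powersetCard (sthr n k) ×ˢ
      Finset.univ.powersetCard (sthr n k)).filter
    (fun SU => (∀ L ∈ SU.1, ∀ L' ∈ SU.1, L ≠ L' → Disjoint L L') ∧
      Disjoint SU.2 (SU.1.biUnion id))

lemma badPairs_card_le (n k : ℕ) (hk : k = 1 ∨ k = 2) (hn : 1 ≤ n) :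
    (badPairs n k).card ≤ n ^ (3 * sthr n k) := by
  have hk2 : k ≤ 2 := by rcases hk with rfl | rfl <;> norm_num
  calc (badPairs n k).card
      ≤ (((Finset.univ.powersetCard k).powersetCard (sthr n k)) ×ˢ
          (Finset.univ.powersetCard (sthr n k) : Finset (Finset (Fin n)))).card :=
        Finset.card_filter_le _ _
    _ = ((Finset.univ.powersetCard k).powersetCard (sthr n k)).card *
        (Finset.univ.powersetCard (sthr n k) : Finset (Finset (Fin n))).card :=
        Finset.card_product _ _
    _ = ((n.choose k).choose (sthr n k)) * (n.choose (sthr n k)) := by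
        simp [Finset.card_powersetCard, Finset.card_univ]
    _ ≤ (n.choose k) ^ (sthr n k) * n ^ (sthr n k) :=
        Nat.mul_le_mul (Nat.choose_le_pow _ _) (Nat.choose_le_pow _ _)
    _ ≤ (n ^ k) ^ (sthr n k) * n ^ (sthr n k) :=
        Nat.mul_le_mul_right _ (Nat.pow_le_pow_left (Nat.choose_le_pow _ _) _)
    _ = n ^ (k * sthr n k + sthr n k) := by rw [← pow_mul, ← pow_add]
    _ ≤ n ^ (3 * sthr n k) := by
        have h2 : k * sthr n k ≤ 2 * sthr n k := Nat.mul_le_mul_right _ hk2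
        exact Nat.pow_le_pow_right hn (by omega)

lemma term_le (n k : ℕ) (hk : k = 1 ∨ k = 2) (hn : 3 ≤ n)
    (hp1 : 100 * Real.sqrt (Real.log n / n) ≤ 1) :
    ((badPairs n k).card : ℝ≥0∞) *
      (1 - ENNReal.ofReal (100 * Real.sqrt (Real.log n / n)) ^ k) ^ (sthr n k * sthr n k)
      ≤ ENNReal.ofReal (1 / n) := by
  have hn0 : (0:ℝ) < n := by positivity
  have ha : 0 < Real.log n := Real.log_pos (by exact_mod_cast by omega)
  set p := 100 * Real.sqrt (Real.log n / n) with hpdef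
  set s := sthr n k with hsdef
  have hs1 : 1 ≤ s := sthr_pos n k hk hn
  have hp0 : 0 ≤ p := by positivity
  have hpk0 : 0 ≤ p ^ k := pow_nonneg hp0 k
  have hpk1 : p ^ k ≤ 1 := pow_le_one₀ hp0 hp1
  have hkey : 100 * Real.log n ≤ p ^ k * (s : ℝ) := key_comp n k hk hn
  have hsub : (1 : ℝ≥0∞) - ENNReal.ofReal p ^ k = ENNReal.ofReal (1 - p ^ k) := by
    rw [← ENNReal.ofReal_pow hp0, ENNReal.ofReal_sub _ hpk0, ENNReal.ofReal_one]
  have hexp : ENNReal.ofReal (1 - p ^ k) ≤ ENNReal.ofReal (Real.exp (-(p ^ k))) :=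
    ENNReal.ofReal_le_ofReal (by linarith [Real.add_one_le_exp (-(p ^ k))])
  have hcard : ((badPairs n k).card : ℝ) ≤ (n : ℝ) ^ (3 * s) := by
    exact_mod_cast Nat.cast_le.2 (badPairs_card_le n k hk (by omega))
  calc ((badPairs n k).card : ℝ≥0∞) * (1 - ENNReal.ofReal p ^ k) ^ (s * s)
      ≤ ((badPairs n k).card : ℝ≥0∞) * ENNReal.ofReal (Real.exp (-(p ^ k))) ^ (s * s) := by
        rw [hsub]
        exact mul_le_mul_right (pow_le_pow_left' hexp _) _
    _ = ENNReal.ofReal (((badPairs n k).card : ℝ) * Real.exp (-(p ^ k)) ^ (s * s)) := by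
        rw [ENNReal.ofReal_mul (by positivity), ← ENNReal.ofReal_pow (Real.exp_nonneg _),
          ENNReal.ofReal_natCast]
    _ ≤ ENNReal.ofReal (1 / n) := by
        apply ENNReal.ofReal_le_ofReal
        have h1 : Real.exp (-(p ^ k)) ^ (s * s) = Real.exp (((s * s : ℕ) : ℝ) * (-(p ^ k))) :=
          (Real.exp_nat_mul _ _).symm
        have h2 : (n : ℝ) ^ (3 * s) = Real.exp (((3 * s : ℕ) : ℝ) * Real.log n) := by
          rw [← Real.exp_log hn0, ← Real.exp_nat_mul, Real.exp_log hn0]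
        have h3 : (1 : ℝ) / n = Real.exp (-Real.log n) := by
          rw [Real.exp_neg, Real.exp_log hn0, one_div]
        calc ((badPairs n k).card : ℝ) * Real.exp (-(p ^ k)) ^ (s * s)
            ≤ (n : ℝ) ^ (3 * s) * Real.exp (-(p ^ k)) ^ (s * s) := by
              apply mul_le_mul_of_nonneg_right hcard (by positivity)
          _ = Real.exp (((3 * s : ℕ) : ℝ) * Real.log n + ((s * s : ℕ) : ℝ) * (-(p ^ k))) := by
              rw [h1, h2, Real.exp_add]
          _ ≤ Real.exp (-Real.log n) := by
              apply Real.exp_le_exp.2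
              push_cast
              have hss : 100 * Real.log n * s ≤ p ^ k * s * s := by
                apply mul_le_mul_of_nonneg_right hkey (by positivity)
              have hs1' : (1 : ℝ) ≤ (s : ℝ) := by exact_mod_cast hs1
              nlinarith [ha.le]
          _ = 1 / n := h3.symm

lemma measure_badset_le (n : ℕ) (p : ℝ) (h0 : 0 ≤ p) (h1 : p ≤ 1) :
    gnp n p {ω | ¬ PropP2b 100 (graphOf ω)} ≤
      ∑ k ∈ ({1, 2} : Finset ℕ),
        ((badPairs n k).card : ℝ≥0∞) * (1 - ENNReal.ofReal p ^ k) ^ (sthr n k * sthr n k) := by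
  have hsub : {ω : EdgeType n → Bool | ¬ PropP2b 100 (graphOf ω)} ⊆
      ⋃ k ∈ ({1, 2} : Finset ℕ), ⋃ SU ∈ badPairs n k,
        {ω | ¬ ∃ L ∈ SU.1, ∃ u ∈ SU.2, ∀ x ∈ L, (graphOf ω).Adj x u} := by
    intro ω hω
    simp only [Set.mem_setOf_eq, PropP2b] at hω
    push_neg at hω
    obtain ⟨k, hk, S, hS, hd, hcS, U, hdU, hcU, hno⟩ := hω
    have hsS : sthr n k ≤ S.card := Nat.ceil_le.2 hcS
    have hsU : sthr n k ≤ U.card := Nat.ceil_le.2 hcU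
    obtain ⟨S', hS'sub, hS'card⟩ := Finset.exists_subset_card_eq hsS
    obtain ⟨U', hU'sub, hU'card⟩ := Finset.exists_subset_card_eq hsU
    have hmem : (S', U') ∈ badPairs n k := by
      rw [badPairs, Finset.mem_filter, Finset.mem_product]
      refine ⟨⟨Finset.mem_powersetCard.2 ⟨fun L hL => Finset.mem_powersetCard.2
          ⟨Finset.subset_univ _, hS L (hS'sub hL)⟩, hS'card⟩,
        Finset.mem_powersetCard.2 ⟨Finset.subset_univ _, hU'card⟩⟩,
        fun L hL L' hL' hne => hd L (hS'sub hL) L' (hS'sub hL') hne,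
        Finset.disjoint_of_subset_left hU'sub (Finset.disjoint_of_subset_right
          (Finset.biUnion_subset_biUnion_of_subset_left id hS'sub) hdU)⟩
    have hkmem : k ∈ ({1, 2} : Finset ℕ) := by
      rcases hk with rfl | rfl <;> simp
    refine Set.mem_biUnion hkmem (Set.mem_biUnion hmem ?_)
    simp only [Set.mem_setOf_eq]
    rintro ⟨L, hL, u, hu, hadj⟩
    obtain ⟨x, hx, hnadj⟩ := hno L (hS'sub hL) u (hU'sub hu)
    exact hnadj (hadj x hx)
  calc gnp n p {ω | ¬ PropP2b 100 (graphOf ω)} ≤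
      gnp n p (⋃ k ∈ ({1, 2} : Finset ℕ), ⋃ SU ∈ badPairs n k,
        {ω | ¬ ∃ L ∈ SU.1, ∃ u ∈ SU.2, ∀ x ∈ L, (graphOf ω).Adj x u}) := measure_mono hsub
    _ ≤ ∑ k ∈ ({1, 2} : Finset ℕ), gnp n p (⋃ SU ∈ badPairs n k,
        {ω | ¬ ∃ L ∈ SU.1, ∃ u ∈ SU.2, ∀ x ∈ L, (graphOf ω).Adj x u}) :=
        measure_biUnion_finset_le _ _
    _ ≤ ∑ k ∈ ({1, 2} : Finset ℕ), ((badPairs n k).card : ℝ≥0∞)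
        * (1 - ENNReal.ofReal p ^ k) ^ (sthr n k * sthr n k) := by
      refine Finset.sum_le_sum fun k hk => ?_
      calc gnp n p (⋃ SU ∈ badPairs n k,
          {ω | ¬ ∃ L ∈ SU.1, ∃ u ∈ SU.2, ∀ x ∈ L, (graphOf ω).Adj x u})
          ≤ ∑ SU ∈ badPairs n k, gnp n p
            {ω | ¬ ∃ L ∈ SU.1, ∃ u ∈ SU.2, ∀ x ∈ L, (graphOf ω).Adj x u} :=
            measure_biUnion_finset_le _ _
        _ ≤ ∑ _SU ∈ badPairs n k, (1 - ENNReal.ofReal p ^ k) ^ (sthr n k * sthr n k) := by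
            refine Finset.sum_le_sum fun SU hSU => ?_
            rw [badPairs, Finset.mem_filter, Finset.mem_product] at hSU
            obtain ⟨⟨hSU1, hSU2⟩, hdisj, hUdisj⟩ := hSU
            obtain ⟨hsub1, hcard1⟩ := Finset.mem_powersetCard.1 hSU1
            obtain ⟨_, hcard2⟩ := Finset.mem_powersetCard.1 hSU2
            have hcards : ∀ L ∈ SU.1, L.card = k := fun L hL =>
              (Finset.mem_powersetCard.1 (hsub1 hL)).2
            have := measure_bad_le n k p h0 h1 SU.1 SU.2 hcards hdisj hUdisj
            rwa [hcard1, hcard2] at this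
        _ = ((badPairs n k).card : ℝ≥0∞)
            * (1 - ENNReal.ofReal p ^ k) ^ (sthr n k * sthr n k) := by
            rw [Finset.sum_const, nsmul_eq_mul]

end AuxSB

theorem stmt9 :
    ∃ C : ℝ, 0 < C ∧
      Filter.Tendsto
        (fun n : ℕ =>
          gnp n (C * Real.sqrt (Real.log n / n))
            {ω | PropP2b C (graphOf ω)})
        Filter.atTop (nhds 1) := by
  refine ⟨100, by norm_num, ?_⟩
  have hlog : Filter.Tendsto (fun n : ℕ => Real.log n / n) Filter.atTop (nhds 0) :=
    (Real.isLittleO_log_id_atTop.tendsto_div_nhds_zero).comp tendsto_natCast_atTop_atTop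
  have hev1 : ∀ᶠ n : ℕ in Filter.atTop, Real.log n / n < 1 / 10000 :=
    hlog.eventually_lt_const (by norm_num)
  have hev : ∀ᶠ n : ℕ in Filter.atTop,
      3 ≤ n ∧ 100 * Real.sqrt (Real.log n / n) ≤ 1 := by
    filter_upwards [hev1, Filter.eventually_ge_atTop 3] with n h1 h3
    refine ⟨h3, ?_⟩
    have hs : Real.sqrt (Real.log n / n) ≤ 1 / 100 := by
      have h2 := Real.sqrt_le_sqrt h1.le
      rwa [show Real.sqrt (1 / 10000 : ℝ) = 1 / 100 by
        rw [show (1 / 10000 : ℝ) = (1 / 100) ^ 2 by norm_num, Real.sqrt_sq (by norm_num)]] at h2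
    linarith
  have hg : Filter.Tendsto (fun n : ℕ => 1 - ENNReal.ofReal (2 / n)) Filter.atTop (nhds 1) := by
    have := ENNReal.Tendsto.sub
      (tendsto_const_nhds : Filter.Tendsto (fun _ : ℕ => (1 : ℝ≥0∞)) Filter.atTop (nhds 1))
      (ENNReal.tendsto_ofReal (tendsto_const_div_atTop_nhds_zero_nat 2))
      (Or.inl ENNReal.one_ne_top)
    simpa using this
  refine tendsto_of_tendsto_of_tendsto_of_le_of_le' hg tendsto_const_nhds ?_ ?_
  · filter_upwards [hev] with n hn
    obtain ⟨hn3, hp1⟩ := hn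
    set p := 100 * Real.sqrt (Real.log n / n) with hpdef
    have hp0 : 0 ≤ p := by positivity
    haveI := bb_prob p hp0 hp1
    haveI : IsProbabilityMeasure (gnp n p) := by unfold gnp; infer_instance
    have hms : MeasurableSet {ω : EdgeType n → Bool | ¬ PropP2b 100 (graphOf ω)} :=
      measurableSet_of_finite _
    have hcompl : {ω : EdgeType n → Bool | ¬ PropP2b 100 (graphOf ω)}ᶜ
        = {ω | PropP2b 100 (graphOf ω)} := by
      ext ω; simp
    have hbad : gnp n p {ω | ¬ PropP2b 100 (graphOf ω)} ≤ ENNReal.ofReal (2 / n) := by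
      refine (measure_badset_le n p hp0 hp1).trans ?_
      rw [Finset.sum_pair (by norm_num : (1 : ℕ) ≠ 2)]
      have t1 := term_le n 1 (Or.inl rfl) hn3 hp1
      have t2 := term_le n 2 (Or.inr rfl) hn3 hp1
      calc _ ≤ ENNReal.ofReal (1 / n) + ENNReal.ofReal (1 / n) := add_le_add t1 t2
        _ = ENNReal.ofReal (2 / n) := by
            rw [← ENNReal.ofReal_add (by positivity) (by positivity)]
            norm_num
            rw [show (n : ℝ)⁻¹ + (n : ℝ)⁻¹ = 2 * (n:ℝ)⁻¹ by ring, div_eq_mul_inv]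
    have hgood : gnp n p {ω | PropP2b 100 (graphOf ω)}
        = 1 - gnp n p {ω | ¬ PropP2b 100 (graphOf ω)} := by
      rw [← hcompl, prob_compl_eq_one_sub hms]
    rw [hgood]
    exact tsub_le_tsub_left hbad 1
  · filter_upwards [hev] with n hn
    obtain ⟨hn3, hp1⟩ := hn
    set p := 100 * Real.sqrt (Real.log n / n) with hpdef
    have hp0 : 0 ≤ p := by positivity
    haveI := bb_prob p hp0 hp1
    haveI : IsProbabilityMeasure (gnp n p) := by unfold gnp; infer_instance
    exact prob_le_one
end
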